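/- arXiv:1209.2859 — 6 statements merged into one kernel-verified Lean document; each statement's English description precedes it below -/
import Mathlib

section
/- Let L ≥ 1 be an integer and for 0 < l ≤ L define m_l(ν) := (1/l) · Σ_{n=l}^{L} [C(L,n) ν^n / (C(L,l) ν^l)] for ν > 0 (this is the expected transition time from state l to state l−1 of the birth–death process on {0,1,…,L} with birth rate (L−l)ν and death rate l in state l). Then for any integers L ≥ l₁ > l₂ ≥ 0, the expected transition time from l₁ to l₂, namely Σ_{l=l₂+1}^{l₁} m_l(ν), satisfies Σ_{l=l₂+1}^{l₁} m_l(ν) ~ (l₂!(L−l₂−1)!/L!) · ν^{L−l₂−1} as ν → ∞. -/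
open Filter Finset

/-- Expected one-step-down transition time from state `l` to state `l-1` of the
birth–death process on `{0,1,…,L}` with birth rate `(L-l)ν` and death rate `l`
in state `l`:  `m_l(ν) = (1/l) · Σ_{n=l}^{L} C(L,n) ν^n / (C(L,l) ν^l)`. -/
noncomputable def meanDownTime (L l : ℕ) (ν : ℝ) : ℝ :=
  (1 / (l : ℝ)) * ∑ n ∈ Finset.Icc l L,
    ((L.choose n : ℝ) * ν ^ n) / ((L.choose l : ℝ) * ν ^ l)

/-- For `L ≥ l₁ > l₂ ≥ 0`, the expected transition time from `l₁` to `l₂`,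
`Σ_{l=l₂+1}^{l₁} m_l(ν)`, satisfies
`Σ_{l=l₂+1}^{l₁} m_l(ν) ~ (l₂!(L−l₂−1)!/L!) · ν^{L−l₂−1}` as `ν → ∞`. -/
theorem meanTransitionTime_asymptotics (L : ℕ) (hL : 1 ≤ L) :
    ∀ l₁ l₂ : ℕ, l₁ ≤ L → l₂ < l₁ →
      Tendsto
        (fun ν : ℝ => (∑ l ∈ Finset.Icc (l₂ + 1) l₁, meanDownTime L l ν) /
          (((l₂.factorial * (L - l₂ - 1).factorial : ℕ) : ℝ) / (L.factorial : ℝ)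
            * ν ^ (L - l₂ - 1)))
        atTop (nhds 1) := by
  intro l₁ l₂ hl₁ hl₂
  have hl₂1 : l₂ + 1 ≤ l₁ := hl₂
  have hl₂L : l₂ + 1 ≤ L := hl₂1.trans hl₁
  set k : ℕ := L - l₂ - 1 with hkdef
  set c : ℝ := ((l₂.factorial * (L - l₂ - 1).factorial : ℕ) : ℝ) / (L.factorial : ℝ)
    with hcdef
  have hc0 : 0 < c := by
    apply div_pos
    · exact_mod_cast Nat.mul_pos l₂.factorial_pos (L - l₂ - 1).factorial_pos
    · exact_mod_cast L.factorial_pos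
  set coeff : ℕ → ℕ → ℝ :=
    fun l n => (L.choose n : ℝ) / ((l : ℝ) * (L.choose l : ℝ) * c) with hco
  set e : ℕ → ℕ → ℤ := fun l n => (n : ℤ) - l - k with he
  have key : ∀ᶠ ν : ℝ in atTop,
      ∑ l ∈ Finset.Icc (l₂ + 1) l₁, ∑ n ∈ Finset.Icc l L, coeff l n * ν ^ (e l n)
        = (∑ l ∈ Finset.Icc (l₂ + 1) l₁, meanDownTime L l ν) / (c * ν ^ k) := by
    filter_upwards [eventually_gt_atTop (0 : ℝ)] with ν hν
    rw [Finset.sum_div]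
    refine Finset.sum_congr rfl fun l hl => ?_
    rw [meanDownTime, mul_sum, Finset.sum_div]
    obtain ⟨hl1, hlL⟩ := Finset.mem_Icc.mp hl
    refine Finset.sum_congr rfl fun n hn => ?_
    have h1 : (l : ℝ) ≠ 0 := by
      have : 0 < l := by omega
      exact_mod_cast this.ne'
    have h2 : (L.choose l : ℝ) ≠ 0 := by
      have : 0 < L.choose l := Nat.choose_pos (hlL.trans hl₁)
      exact_mod_cast this.ne'
    have hν0 : ν ≠ 0 := hν.ne'
    have hz : ν ^ (e l n) = ν ^ n * (ν ^ l)⁻¹ * (ν ^ k)⁻¹ := by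
      rw [he]
      rw [zpow_sub₀ hν0, zpow_sub₀ hν0, zpow_natCast, zpow_natCast, zpow_natCast]
      ring
    rw [hco, hz]
    field_simp
  refine Tendsto.congr' key ?_
  have hlim : Tendsto
      (fun ν : ℝ => ∑ l ∈ Finset.Icc (l₂ + 1) l₁, ∑ n ∈ Finset.Icc l L,
        coeff l n * ν ^ (e l n)) atTop
      (nhds (∑ l ∈ Finset.Icc (l₂ + 1) l₁, ∑ n ∈ Finset.Icc l L,
        coeff l n * (if e l n = 0 then (1 : ℝ) else 0))) := by
    refine tendsto_finset_sum _ fun l hl => tendsto_finset_sum _ fun n hn => ?_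
    obtain ⟨hl1, hlL⟩ := Finset.mem_Icc.mp hl
    obtain ⟨hn1, hnL⟩ := Finset.mem_Icc.mp hn
    by_cases h : e l n = 0
    · simp only [h, if_true, zpow_zero, mul_one]
      exact tendsto_const_nhds
    · have hneg : e l n < 0 := by
        have : e l n ≤ 0 := by simp only [he]; omega
        omega
      simp only [h, if_false]
      simpa using (tendsto_zpow_atTop_zero hneg).const_mul (coeff l n)
  have hS : (∑ l ∈ Finset.Icc (l₂ + 1) l₁, ∑ n ∈ Finset.Icc l L,
      coeff l n * (if e l n = 0 then (1 : ℝ) else 0)) = 1 := by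
    rw [Finset.sum_eq_single (l₂ + 1)]
    · rw [Finset.sum_eq_single L]
      · have hez : e (l₂ + 1) L = 0 := by simp only [he]; omega
        simp only [hez, if_pos, mul_one, hco]
        have h := Nat.choose_mul_factorial_mul_factorial hl₂L
        rw [Nat.factorial_succ] at h
        have hLL : L - (l₂ + 1) = L - l₂ - 1 := by omega
        rw [hLL] at h
        have hR : ((L.choose (l₂+1) * ((l₂ + 1) * l₂.factorial) * (L - l₂ - 1).factorial : ℕ) : ℝ)
            = (L.factorial : ℝ) := by exact_mod_cast congrArg Nat.cast h
        push_cast at hR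
        have hch : (L.choose (l₂ + 1) : ℝ) ≠ 0 := by
          exact_mod_cast (Nat.choose_pos hl₂L).ne'
        have hLf : (L.factorial : ℝ) ≠ 0 := by exact_mod_cast L.factorial_pos.ne'
        have hl₂f : (l₂.factorial : ℝ) ≠ 0 := by exact_mod_cast l₂.factorial_pos.ne'
        have hLk : ((L - l₂ - 1).factorial : ℝ) ≠ 0 := by
          exact_mod_cast (L - l₂ - 1).factorial_pos.ne'
        simp only [Nat.choose_self, hcdef]
        push_cast
        field_simp
        linear_combination -hR
      · intro n hn hne
        obtain ⟨hn1, hnL⟩ := Finset.mem_Icc.mp hn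
        have : e (l₂ + 1) n ≠ 0 := by simp only [he]; omega
        rw [if_neg this, mul_zero]
      · intro hL'
        exact absurd (Finset.mem_Icc.mpr ⟨hl₂L, le_rfl⟩) hL'
    · intro l hl hne
      obtain ⟨hl1, hlL⟩ := Finset.mem_Icc.mp hl
      refine Finset.sum_eq_zero fun n hn => ?_
      obtain ⟨hn1, hnL⟩ := Finset.mem_Icc.mp hn
      have : e l n ≠ 0 := by simp only [he]; omega
      rw [if_neg this, mul_zero]
    · intro h'
      exact absurd (Finset.mem_Icc.mpr ⟨le_rfl, hl₂1⟩) h'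
  rw [← hS]
  exact hlim
end

section
/- Let L ≥ 2. There exists ν₀ > 0 such that for all ν > ν₀ the eigenvalues of A(ν) satisfy α_1(ν) ≤ L + √(Lν) and α_i(ν) ≥ (L−1) + ν − √ν·(√L + √(2(L−1))) for every i = 2, …, L. -/
open Matrix Finset Pointwise

/-- The `L×L` matrix `A(ν)`: the negative of the generator, restricted to the
transient states `{1,…,L}`, of the birth–death process on `{0,1,…,L}` in which
state `l` has birth rate `(L−l)ν` and death rate `l`, and state `0` is
absorbing.  Index `i : Fin L` represents the state `l = i + 1`. -/
noncomputable def birthDeathMat (L : ℕ) (ν : ℝ) : Matrix (Fin L) (Fin L) ℝ :=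
  Matrix.of fun i j =>
    if j = i then ((L : ℝ) - ((i : ℕ) + 1)) * ν + ((i : ℕ) + 1)
    else if (j : ℕ) = (i : ℕ) + 1 then -(((L : ℝ) - ((i : ℕ) + 1)) * ν)
    else if (j : ℕ) + 1 = (i : ℕ) then -(((i : ℕ) + 1 : ℝ))
    else 0

namespace BDGersh

noncomputable def offd (L : ℕ) (ν : ℝ) (k : ℕ) : ℝ :=
  Real.sqrt ((((L : ℝ) - ((k : ℝ) + 1)) * ν) * ((k : ℝ) + 2))

noncomputable def dg (L : ℕ) (ν : ℝ) (k : ℕ) : ℝ :=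
  ((L : ℝ) - ((k : ℝ) + 1)) * ν + ((k : ℝ) + 1)

noncomputable def S (L : ℕ) (ν : ℝ) : Matrix (Fin L) (Fin L) ℝ :=
  Matrix.of fun i j =>
    if j = i then dg L ν i
    else if (j : ℕ) = (i : ℕ) + 1 then -offd L ν i
    else if (j : ℕ) + 1 = (i : ℕ) then -offd L ν j
    else 0

noncomputable def dvec (L : ℕ) (ν : ℝ) (k : ℕ) : ℝ :=
  ∏ m ∈ Finset.range k, Real.sqrt (((m : ℝ) + 2) / (((L : ℝ) - ((m : ℝ) + 1)) * ν))

lemma offd_nonneg (L : ℕ) (ν : ℝ) (k : ℕ) : 0 ≤ offd L ν k := Real.sqrt_nonneg _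

lemma dvec_pos (L : ℕ) {ν : ℝ} (hν : 0 < ν) {k : ℕ} (hk : k < L) : 0 < dvec L ν k := by
  refine Finset.prod_pos fun m hm => Real.sqrt_pos.mpr (div_pos (by positivity) (mul_pos ?_ hν))
  have hm' : m + 1 < L := by have := Finset.mem_range.mp hm; omega
  have : (m : ℝ) + 1 < (L : ℝ) := by exact_mod_cast hm'
  linarith

lemma key1 {c m D : ℝ} (hc : 0 < c) (hm : 0 < m) (hD : 0 < D) :
    D * -Real.sqrt (c * m) * (D * Real.sqrt (m / c))⁻¹ = -c := by
  have h : Real.sqrt (c * m) * (Real.sqrt (m / c))⁻¹ = c := by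
    rw [← Real.sqrt_inv, ← Real.sqrt_mul (by positivity)]
    rw [show c * m * (m / c)⁻¹ = c ^ 2 by field_simp]
    exact Real.sqrt_sq hc.le
  rw [mul_inv]
  have h2 : D * -Real.sqrt (c * m) * (D⁻¹ * (Real.sqrt (m / c))⁻¹)
      = -(Real.sqrt (c * m) * (Real.sqrt (m / c))⁻¹ * (D * D⁻¹)) := by ring
  rw [h2, mul_inv_cancel₀ hD.ne', mul_one, h]

lemma key2 {c m D : ℝ} (hc : 0 < c) (hm : 0 < m) (hD : 0 < D) :
    D * Real.sqrt (m / c) * -Real.sqrt (c * m) * D⁻¹ = -m := by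
  have h : Real.sqrt (m / c) * Real.sqrt (c * m) = m := by
    rw [← Real.sqrt_mul (by positivity)]
    rw [show m / c * (c * m) = m ^ 2 by field_simp]
    exact Real.sqrt_sq hm.le
  have h2 : D * Real.sqrt (m / c) * -Real.sqrt (c * m) * D⁻¹
      = -(Real.sqrt (m / c) * Real.sqrt (c * m) * (D * D⁻¹)) := by ring
  rw [h2, mul_inv_cancel₀ hD.ne', mul_one, h]

lemma bd_eq_conj (L : ℕ) {ν : ℝ} (hν : 0 < ν) :
    birthDeathMat L ν =
      Matrix.diagonal (fun i : Fin L => dvec L ν (i : ℕ)) * S L ν *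
        Matrix.diagonal (fun i : Fin L => (dvec L ν (i : ℕ))⁻¹) := by
  ext i j
  rw [Matrix.mul_diagonal, Matrix.diagonal_mul]
  simp only [birthDeathMat, S, Matrix.of_apply]
  split_ifs with h1 h2 h3
  · subst h1
    have hd : dvec L ν (j : ℕ) ≠ 0 := (dvec_pos L hν j.2).ne'
    rw [mul_comm (dvec L ν (j : ℕ)) (dg L ν (j : ℕ)), mul_assoc, mul_inv_cancel₀ hd, mul_one]
    rfl
  · -- superdiagonal
    have hiL : (i : ℕ) + 1 < L := h2 ▸ j.2
    have hc : (0:ℝ) < ((L : ℝ) - ((i : ℕ) + 1)) * ν := by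
      have : ((i:ℕ) : ℝ) + 1 < (L : ℝ) := by exact_mod_cast hiL
      have h' : (0:ℝ) < (L : ℝ) - (((i:ℕ):ℝ) + 1) := by linarith
      exact mul_pos h' hν
    have hD : 0 < dvec L ν (i : ℕ) := dvec_pos L hν i.2
    have hsucc : dvec L ν ((i:ℕ)+1) = dvec L ν (i:ℕ) *
        Real.sqrt (((((i:ℕ)):ℝ) + 2) / (((L:ℝ) - ((((i:ℕ)):ℝ) + 1)) * ν)) :=
      Finset.prod_range_succ _ _
    rw [h2, hsucc]
    exact (key1 hc (by positivity) hD).symm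
  · -- subdiagonal
    have hjL : (j : ℕ) + 1 < L := h3 ▸ i.2
    have hc : (0:ℝ) < ((L : ℝ) - ((j : ℕ) + 1)) * ν := by
      have : ((j:ℕ) : ℝ) + 1 < (L : ℝ) := by exact_mod_cast hjL
      have h' : (0:ℝ) < (L : ℝ) - (((j:ℕ):ℝ) + 1) := by linarith
      exact mul_pos h' hν
    have hD : 0 < dvec L ν (j : ℕ) := dvec_pos L hν j.2
    have hij : ((i:ℕ) : ℝ) + 1 = ((j:ℕ) : ℝ) + 2 := by
      have : (i : ℕ) = (j : ℕ) + 1 := h3.symm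
      rw [this]; push_cast; ring
    have hsucc : dvec L ν ((j:ℕ)+1) = dvec L ν (j:ℕ) *
        Real.sqrt (((((j:ℕ)):ℝ) + 2) / (((L:ℝ) - ((((j:ℕ)):ℝ) + 1)) * ν)) :=
      Finset.prod_range_succ _ _
    rw [hij, ← h3, hsucc]
    exact (key2 hc (by positivity) hD).symm
  · simp

lemma spec_S_eq (L : ℕ) {ν : ℝ} (hν : 0 < ν) :
    spectrum ℝ (S L ν) = spectrum ℝ (birthDeathMat L ν) := by
  have hd : ∀ i : Fin L, dvec L ν (i : ℕ) ≠ 0 := fun i => (dvec_pos L hν i.2).ne'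
  set D := Matrix.diagonal (fun i : Fin L => dvec L ν (i : ℕ)) with hD
  set E := Matrix.diagonal (fun i : Fin L => (dvec L ν (i : ℕ))⁻¹) with hE
  have hDE : D * E = 1 := by
    rw [hD, hE, Matrix.diagonal_mul_diagonal,
      show (fun i : Fin L => dvec L ν (i : ℕ) * (dvec L ν (i : ℕ))⁻¹) = fun _ => (1:ℝ) from
        funext fun i => mul_inv_cancel₀ (hd i)]
    exact Matrix.diagonal_one
  have hED : E * D = 1 := by
    rw [hD, hE, Matrix.diagonal_mul_diagonal,
      show (fun i : Fin L => (dvec L ν (i : ℕ))⁻¹ * dvec L ν (i : ℕ)) = fun _ => (1:ℝ) from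
        funext fun i => inv_mul_cancel₀ (hd i)]
    exact Matrix.diagonal_one
  have hu : ∀ x : ℝ, algebraMap ℝ (Matrix (Fin L) (Fin L) ℝ) x - birthDeathMat L ν
      = D * (algebraMap ℝ (Matrix (Fin L) (Fin L) ℝ) x - S L ν) * E := by
    intro x
    rw [mul_sub, sub_mul, bd_eq_conj L hν]
    congr 1
    rw [Algebra.algebraMap_eq_smul_one, mul_smul_comm, mul_one, smul_mul_assoc, hDE]
  ext x
  simp only [spectrum.mem_iff, hu x]
  let u : (Matrix (Fin L) (Fin L) ℝ)ˣ := ⟨D, E, hDE, hED⟩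
  have h1 : D * (algebraMap ℝ (Matrix (Fin L) (Fin L) ℝ) x - S L ν) * E
      = (u : Matrix (Fin L) (Fin L) ℝ) * (algebraMap ℝ (Matrix (Fin L) (Fin L) ℝ) x - S L ν) *
        ((u⁻¹ : (Matrix (Fin L) (Fin L) ℝ)ˣ) : Matrix (Fin L) (Fin L) ℝ) := rfl
  rw [h1, Units.isUnit_mul_units, Units.isUnit_units_mul]

lemma S_symm_entries (L : ℕ) (ν : ℝ) (i j : Fin L) : S L ν j i = S L ν i j := by
  simp only [S, Matrix.of_apply]
  rcases eq_or_ne i j with rfl | hij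
  · simp
  · rw [if_neg hij, if_neg (Ne.symm hij)]
    by_cases h2 : (i : ℕ) = (j : ℕ) + 1
    · rw [if_pos h2, if_neg (by omega), if_pos (by omega : (j:ℕ) + 1 = (i:ℕ))]
    · rw [if_neg h2]
      by_cases h3 : (i : ℕ) + 1 = (j : ℕ)
      · rw [if_pos h3, if_pos (h3.symm : (j:ℕ) = (i:ℕ) + 1)]
      · rw [if_neg h3, if_neg (by omega), if_neg (by omega)]

lemma S_transpose (L : ℕ) (ν : ℝ) : (S L ν)ᵀ = S L ν := by
  ext i j
  rw [Matrix.transpose_apply]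
  exact S_symm_entries L ν i j

lemma S_herm (L : ℕ) (ν : ℝ) : (S L ν).IsHermitian := by
  show _ᴴ = _
  ext i j
  rw [Matrix.conjTranspose_apply, star_trivial]
  exact S_symm_entries L ν i j

lemma eig_vec {m : ℕ} {M : Matrix (Fin m) (Fin m) ℝ} {t : ℝ} (ht : t ∈ spectrum ℝ M) :
    ∃ v, v ≠ 0 ∧ M *ᵥ v = t • v := by
  have hnu := spectrum.mem_iff.mp ht
  have hdet : (algebraMap ℝ (Matrix (Fin m) (Fin m) ℝ) t - M).det = 0 := by
    by_contra h
    exact hnu ((Matrix.isUnit_iff_isUnit_det _).mpr (isUnit_iff_ne_zero.mpr h))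
  obtain ⟨v, hv0, hv⟩ := (Matrix.exists_mulVec_eq_zero_iff).mpr hdet
  refine ⟨v, hv0, ?_⟩
  have h2 : (algebraMap ℝ (Matrix (Fin m) (Fin m) ℝ) t - M) *ᵥ v = t • v - M *ᵥ v := by
    rw [Matrix.sub_mulVec]
    congr 1
    rw [Algebra.algebraMap_eq_smul_one, Matrix.smul_mulVec, Matrix.one_mulVec]
  rw [h2, sub_eq_zero] at hv
  exact hv.symm

lemma orth {m : ℕ} {M : Matrix (Fin m) (Fin m) ℝ} (hsym : Mᵀ = M) {a b : ℝ} {v w : Fin m → ℝ}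
    (hv : M *ᵥ v = a • v) (hw : M *ᵥ w = b • w) (hab : a ≠ b) : v ⬝ᵥ w = 0 := by
  have h1 : v ᵥ* M = M *ᵥ v := by
    conv_lhs => rw [← hsym]
    rw [Matrix.vecMul_transpose]
  have h2 : a * (v ⬝ᵥ w) = b * (v ⬝ᵥ w) := by
    calc a * (v ⬝ᵥ w) = (a • v) ⬝ᵥ w := by rw [smul_dotProduct]; simp
    _ = (M *ᵥ v) ⬝ᵥ w := by rw [hv]
    _ = (v ᵥ* M) ⬝ᵥ w := by rw [h1]
    _ = v ⬝ᵥ (M *ᵥ w) := (Matrix.dotProduct_mulVec _ _ _).symm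
    _ = v ⬝ᵥ (b • w) := by rw [hw]
    _ = b * (v ⬝ᵥ w) := by rw [dotProduct_smul]; simp
  by_contra h
  exact hab (mul_right_cancel₀ h h2)

lemma dot_pos {m : ℕ} {v : Fin m → ℝ} (hv : v ≠ 0) : 0 < v ⬝ᵥ v := by
  rcases lt_or_eq_of_le (Finset.sum_nonneg fun i _ => mul_self_nonneg (v i) :
      (0:ℝ) ≤ v ⬝ᵥ v) with h | h
  · exact h
  · exact absurd (dotProduct_self_eq_zero.mp h.symm) hv

lemma herm_small {m : ℕ} {M : Matrix (Fin m) (Fin m) ℝ} (hM : M.IsHermitian) (t : ℝ)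
    (i0 : Fin m) (hd : M i0 i0 < t) : ∃ s ∈ spectrum ℝ M, s < t := by
  by_contra hcon
  push_neg at hcon
  set N := M - algebraMap ℝ (Matrix (Fin m) (Fin m) ℝ) t with hN
  have hNh : N.IsHermitian := by
    refine hM.sub ?_
    show _ᴴ = _
    rw [Algebra.algebraMap_eq_smul_one, Matrix.conjTranspose_smul, star_trivial,
      Matrix.conjTranspose_one]
  have key : ∀ j, 0 ≤ hNh.eigenvalues j := by
    intro j
    have hm2 : hNh.eigenvalues j ∈ spectrum ℝ N := hNh.eigenvalues_mem_spectrum_real j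
    have hm3 : hNh.eigenvalues j ∈ spectrum ℝ M - ({t} : Set ℝ) := by
      rw [spectrum.sub_singleton_eq]; exact hm2
    obtain ⟨s2, hs2, b2, hb2, hab⟩ := Set.mem_sub.mp hm3
    rw [Set.mem_singleton_iff] at hb2
    subst hb2
    rw [← hab]
    linarith [hcon s2 hs2]
  have hpsd := hNh.posSemidef_iff_eigenvalues_nonneg.mpr key
  have hval : Pi.single i0 (1:ℝ) ⬝ᵥ (N *ᵥ Pi.single i0 1) = N i0 i0 := by
    rw [single_dotProduct, one_mul]
    show N i0 ⬝ᵥ Pi.single i0 1 = _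
    rw [dotProduct_single, mul_one]
  have h0 := hpsd.dotProduct_mulVec_nonneg (Pi.single i0 1)
  have hstar : star (Pi.single i0 1 : Fin m → ℝ) = Pi.single i0 1 := by
    ext k; simp [Pi.star_apply, Pi.single_apply, apply_ite]
  rw [hstar, hval] at h0
  have hNd : N i0 i0 = M i0 i0 - t := by
    rw [hN, Matrix.sub_apply, Matrix.algebraMap_matrix_apply, if_pos rfl]
    simp
  rw [hNd] at h0
  linarith

/-- the lower bound constant -/
noncomputable def C (L : ℕ) (ν : ℝ) : ℝ :=
  ((L : ℝ) - 1) + ν - Real.sqrt ν * (Real.sqrt (L : ℝ) + Real.sqrt (2 * ((L : ℝ) - 1)))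

lemma S_split (n : ℕ) (ν : ℝ) :
    S (n+2) ν = Matrix.diagonal (fun i : Fin (n+2) => dg (n+2) ν (i:ℕ))
      + ∑ p : Fin (n+1), (-offd (n+2) ν (p:ℕ)) •
          (Matrix.single p.castSucc p.succ (1:ℝ)
            + Matrix.single p.succ p.castSucc 1) := by
  ext i j
  rw [Matrix.add_apply, Matrix.diagonal_apply, Matrix.sum_apply]
  simp only [Matrix.smul_apply, Matrix.add_apply, Matrix.single, Matrix.of_apply,
    smul_eq_mul, S]
  by_cases h1 : j = i
  · rw [if_pos h1, if_pos h1.symm]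
    have hz : ∀ p : Fin (n+1), p ∈ Finset.univ → -offd (n+2) ν (p:ℕ) *
        ((if p.castSucc = i ∧ p.succ = j then (1:ℝ) else 0)
          + (if p.succ = i ∧ p.castSucc = j then (1:ℝ) else 0)) = 0 := by
      intro p _
      rw [if_neg, if_neg, add_zero, mul_zero]
      · rintro ⟨ha, hb⟩
        rw [Fin.ext_iff] at ha hb
        simp only [Fin.val_succ, Fin.coe_castSucc] at ha hb
        rw [Fin.ext_iff] at h1; omega
      · rintro ⟨ha, hb⟩
        rw [Fin.ext_iff] at ha hb
        simp only [Fin.val_succ, Fin.coe_castSucc] at ha hb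
        rw [Fin.ext_iff] at h1; omega
    rw [Finset.sum_eq_zero hz, add_zero]
  · rw [if_neg h1, if_neg (fun h : i = j => h1 h.symm)]
    by_cases h2 : (j : ℕ) = (i : ℕ) + 1
    · rw [if_pos h2]
      have hp0 : (i : ℕ) < n + 1 := by have := j.isLt; omega
      rw [Fintype.sum_eq_single (⟨(i : ℕ), hp0⟩ : Fin (n+1)) ?_]
      · rw [if_pos ⟨Fin.ext (by simp), Fin.ext (by simp [h2.symm])⟩, if_neg ?_]
        · ring
        · rintro ⟨ha, hb⟩
          rw [Fin.ext_iff] at ha hb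
          simp only [Fin.val_succ, Fin.coe_castSucc] at ha hb
          omega
      · intro b hb
        rw [if_neg, if_neg, add_zero, mul_zero]
        · rintro ⟨ha, hb'⟩
          rw [Fin.ext_iff] at ha hb'
          simp only [Fin.val_succ, Fin.coe_castSucc] at ha hb'
          omega
        · rintro ⟨ha, hb'⟩
          rw [Fin.ext_iff] at ha hb'
          simp only [Fin.val_succ, Fin.coe_castSucc] at ha hb'
          exact hb (Fin.ext (by simpa using ha))
    · rw [if_neg h2]
      by_cases h3 : (j : ℕ) + 1 = (i : ℕ)
      · rw [if_pos h3]
        have hp0 : (j : ℕ) < n + 1 := by have := i.isLt; omega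
        rw [Fintype.sum_eq_single (⟨(j : ℕ), hp0⟩ : Fin (n+1)) ?_]
        · rw [if_neg ?_, if_pos ⟨Fin.ext (by simp [h3]), Fin.ext (by simp)⟩]
          · ring
          · rintro ⟨ha, hb⟩
            rw [Fin.ext_iff] at ha hb
            simp only [Fin.val_succ, Fin.coe_castSucc] at ha hb
            omega
        · intro b hb
          rw [if_neg, if_neg, add_zero, mul_zero]
          · rintro ⟨ha, hb'⟩
            rw [Fin.ext_iff] at ha hb'
            simp only [Fin.val_succ, Fin.coe_castSucc] at ha hb'
            exact hb (Fin.ext (by simpa using hb'))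
          · rintro ⟨ha, hb'⟩
            rw [Fin.ext_iff] at ha hb'
            simp only [Fin.val_succ, Fin.coe_castSucc] at ha hb'
            omega
      · rw [if_neg h3]
        have hz : ∀ p : Fin (n+1), p ∈ Finset.univ → -offd (n+2) ν (p:ℕ) *
            ((if p.castSucc = i ∧ p.succ = j then (1:ℝ) else 0)
              + (if p.succ = i ∧ p.castSucc = j then (1:ℝ) else 0)) = 0 := by
          intro p _
          rw [if_neg, if_neg, add_zero, mul_zero]
          · rintro ⟨ha, hb⟩
            rw [Fin.ext_iff] at ha hb
            simp only [Fin.val_succ, Fin.coe_castSucc] at ha hb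
            omega
          · rintro ⟨ha, hb⟩
            rw [Fin.ext_iff] at ha hb
            simp only [Fin.val_succ, Fin.coe_castSucc] at ha hb
            omega
        rw [Finset.sum_eq_zero hz, zero_add]

lemma sum_mulVec {k : Type*} [Fintype k] {m : Type*} [Fintype m] (f : k → Matrix m m ℝ)
    (x : m → ℝ) : (∑ p, f p) *ᵥ x = ∑ p, f p *ᵥ x := by
  ext i
  rw [Finset.sum_apply]
  simp only [Matrix.mulVec, dotProduct, Matrix.sum_apply, Finset.sum_mul]
  exact Finset.sum_comm

lemma dot_sum {k m : Type*} [Fintype k] [Fintype m] (x : m → ℝ) (v : k → m → ℝ) :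
    x ⬝ᵥ (∑ p, v p) = ∑ p, x ⬝ᵥ v p := by
  simp only [dotProduct, Finset.sum_apply, Finset.mul_sum]
  exact Finset.sum_comm

lemma dot_update {m : Type*} [Fintype m] [DecidableEq m] (x : m → ℝ) (a : m) (c : ℝ) :
    x ⬝ᵥ Function.update 0 a c = x a * c := by
  simp only [dotProduct, Function.update_apply, Pi.zero_apply, mul_ite, mul_zero]
  rw [Finset.sum_ite_eq' Finset.univ a (fun i => x i * c), if_pos (Finset.mem_univ a)]

lemma quad_eq (n : ℕ) (ν : ℝ) (x : Fin (n+2) → ℝ) :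
    x ⬝ᵥ (S (n+2) ν *ᵥ x) = (∑ i : Fin (n+2), dg (n+2) ν (i:ℕ) * x i ^ 2)
      - ∑ p : Fin (n+1), 2 * offd (n+2) ν (p:ℕ) * (x p.castSucc * x p.succ) := by
  rw [S_split n ν, Matrix.add_mulVec, dotProduct_add, sum_mulVec, dot_sum]
  have hdiag : x ⬝ᵥ (Matrix.diagonal (fun i : Fin (n+2) => dg (n+2) ν (i:ℕ)) *ᵥ x)
      = ∑ i : Fin (n+2), dg (n+2) ν (i:ℕ) * x i ^ 2 := by
    simp only [dotProduct, Matrix.mulVec_diagonal]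
    exact Finset.sum_congr rfl fun i _ => by ring
  have hterm : ∀ p : Fin (n+1), x ⬝ᵥ (((-offd (n+2) ν (p:ℕ)) •
      (Matrix.single p.castSucc p.succ (1:ℝ)
        + Matrix.single p.succ p.castSucc 1)) *ᵥ x)
      = -(2 * offd (n+2) ν (p:ℕ) * (x p.castSucc * x p.succ)) := by
    intro p
    rw [Matrix.smul_mulVec, dotProduct_smul, Matrix.add_mulVec,
      dotProduct_add, Matrix.single_mulVec, Matrix.single_mulVec,
      dot_update, dot_update]
    simp only [one_mul, smul_eq_mul]
    ring
  rw [hdiag]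
  have hsum : ∑ p : Fin (n+1), x ⬝ᵥ (((-offd (n+2) ν (p:ℕ)) •
      (Matrix.single p.castSucc p.succ (1:ℝ)
        + Matrix.single p.succ p.castSucc 1)) *ᵥ x)
      = -∑ p : Fin (n+1), 2 * offd (n+2) ν (p:ℕ) * (x p.castSucc * x p.succ) := by
    rw [← Finset.sum_neg_distrib]
    exact Finset.sum_congr rfl fun p _ => hterm p
  rw [hsum]
  exact (sub_eq_add_neg _ _).symm

lemma coeff_bound (n : ℕ) {ν : ℝ} (hν : 9 * ((n:ℝ) + 2)^2 < ν) {k : ℕ} (hk : k ≤ n) :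
    offd (n+2) ν k + (if k = 0 then 0 else offd (n+2) ν (k-1)) + C (n+2) ν
      ≤ dg (n+2) ν k := by
  have hν0 : (0:ℝ) < ν := lt_trans (by positivity) hν
  have hLr : (((n+2:ℕ)):ℝ) = (n:ℝ) + 2 := by push_cast; ring
  set Lr : ℝ := (n:ℝ) + 2 with hLrdef
  have hkn : (k:ℝ) ≤ (n:ℝ) := Nat.cast_le.mpr hk
  have hk0 : (0:ℝ) ≤ (k:ℝ) := Nat.cast_nonneg k
  have hstep1 : (if k = 0 then (0:ℝ) else offd (n+2) ν (k-1))
      ≤ Real.sqrt ((Lr - (k:ℝ)) * ν * ((k:ℝ) + 1)) := by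
    split_ifs with h0
    · positivity
    · apply le_of_eq
      unfold offd
      have h1k : (1:ℕ) ≤ k := Nat.one_le_iff_ne_zero.mpr h0
      have hc : ((k-1:ℕ):ℝ) = (k:ℝ) - 1 := by
        push_cast [Nat.cast_sub h1k]; ring
      rw [hLr, hc]
      ring_nf
  have main : Real.sqrt ((Lr - ((k:ℝ)+1)) * ν * ((k:ℝ)+2))
      + Real.sqrt ((Lr - (k:ℝ)) * ν * ((k:ℝ)+1)) + C (n+2) ν
      ≤ (Lr - ((k:ℝ)+1)) * ν + ((k:ℝ)+1) := by
    have hCle : C (n+2) ν ≤ (Lr - 1) + ν := by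
      unfold C
      rw [hLr]
      have : (0:ℝ) ≤ Real.sqrt ν * (Real.sqrt Lr + Real.sqrt (2 * (Lr - 1))) := by positivity
      linarith
    by_cases hkn' : k = n
    · subst hkn'
      have e1 : (Lr - ((k:ℝ)+1)) * ν * ((k:ℝ)+2) = ν * Lr := by rw [hLrdef]; ring
      have e2 : (Lr - (k:ℝ)) * ν * ((k:ℝ)+1) = ν * (2 * (Lr - 1)) := by rw [hLrdef]; ring
      have e3 : (Lr - ((k:ℝ)+1)) * ν = ν := by rw [hLrdef]; ring
      rw [e1, e2, e3, Real.sqrt_mul hν0.le, Real.sqrt_mul hν0.le]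
      unfold C
      rw [hLr]
      nlinarith [hLrdef]
    · have hklt : k < n := lt_of_le_of_ne hk hkn'
      have hkr : (k:ℝ) ≤ (n:ℝ) - 1 := by
        have : ((k+1:ℕ):ℝ) ≤ (n:ℝ) := Nat.cast_le.mpr (by omega)
        push_cast at this; linarith
      have hLrpos : (0:ℝ) < Lr := by rw [hLrdef]; positivity
      have hLr2 : (2:ℝ) ≤ Lr := by
        rw [hLrdef]; have : (0:ℝ) ≤ (n:ℝ) := Nat.cast_nonneg n; linarith
      have hs : 3 * Lr ≤ Real.sqrt ν := by
        rw [Real.le_sqrt (by positivity) hν0.le]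
        nlinarith [hν]
      have hb1 : Real.sqrt ((Lr - ((k:ℝ)+1)) * ν * ((k:ℝ)+2)) ≤ Real.sqrt ν * Lr := by
        have h1 : Lr - ((k:ℝ)+1) ≤ Lr := by linarith
        have h2 : (k:ℝ) + 2 ≤ Lr := by rw [hLrdef]; linarith
        have h3 : (0:ℝ) ≤ Lr - ((k:ℝ)+1) := by rw [hLrdef]; linarith
        have harg : (Lr - ((k:ℝ)+1)) * ν * ((k:ℝ)+2) ≤ Lr * ν * Lr := by
          calc (Lr - ((k:ℝ)+1)) * ν * ((k:ℝ)+2) ≤ Lr * ν * ((k:ℝ)+2) :=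
                mul_le_mul_of_nonneg_right (mul_le_mul_of_nonneg_right h1 hν0.le)
                  (by positivity)
          _ ≤ Lr * ν * Lr := mul_le_mul_of_nonneg_left h2 (by positivity)
        calc Real.sqrt ((Lr - ((k:ℝ)+1)) * ν * ((k:ℝ)+2)) ≤ Real.sqrt (Lr * ν * Lr) :=
              Real.sqrt_le_sqrt harg
        _ = Real.sqrt ν * Lr := by
              rw [show Lr * ν * Lr = ν * Lr^2 by ring, Real.sqrt_mul hν0.le,
                Real.sqrt_sq hLrpos.le]
      have hb2 : Real.sqrt ((Lr - (k:ℝ)) * ν * ((k:ℝ)+1)) ≤ Real.sqrt ν * Lr := by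
        have h1 : Lr - (k:ℝ) ≤ Lr := by linarith
        have h2 : (k:ℝ) + 1 ≤ Lr := by rw [hLrdef]; linarith
        have harg : (Lr - (k:ℝ)) * ν * ((k:ℝ)+1) ≤ Lr * ν * Lr := by
          calc (Lr - (k:ℝ)) * ν * ((k:ℝ)+1) ≤ Lr * ν * ((k:ℝ)+1) :=
                mul_le_mul_of_nonneg_right (mul_le_mul_of_nonneg_right h1 hν0.le)
                  (by positivity)
          _ ≤ Lr * ν * Lr := mul_le_mul_of_nonneg_left h2 (by positivity)
        calc Real.sqrt ((Lr - (k:ℝ)) * ν * ((k:ℝ)+1)) ≤ Real.sqrt (Lr * ν * Lr) :=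
              Real.sqrt_le_sqrt harg
        _ = Real.sqrt ν * Lr := by
              rw [show Lr * ν * Lr = ν * Lr^2 by ring, Real.sqrt_mul hν0.le,
                Real.sqrt_sq hLrpos.le]
      have hrhs : 2 * ν + ((k:ℝ)+1) ≤ (Lr - ((k:ℝ)+1)) * ν + ((k:ℝ)+1) := by
        have h2 : (2:ℝ) ≤ Lr - ((k:ℝ)+1) := by rw [hLrdef]; linarith
        nlinarith [hν0.le]
      have hfin : Real.sqrt ν * Lr + Real.sqrt ν * Lr + ((Lr - 1) + ν) ≤ 2 * ν + ((k:ℝ)+1) := by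
        have hsq : Real.sqrt ν ^ 2 = ν := Real.sq_sqrt hν0.le
        nlinarith [mul_nonneg (sub_nonneg.mpr hs) (Real.sqrt_nonneg ν),
          mul_nonneg (sub_nonneg.mpr hs) hLrpos.le,
          mul_nonneg hLrpos.le (by linarith : (0:ℝ) ≤ Lr - 1), hsq, hk0]
      linarith
  calc offd (n+2) ν k + (if k = 0 then 0 else offd (n+2) ν (k-1)) + C (n+2) ν
      ≤ Real.sqrt ((Lr - ((k:ℝ)+1)) * ν * ((k:ℝ)+2))
        + Real.sqrt ((Lr - (k:ℝ)) * ν * ((k:ℝ)+1)) + C (n+2) ν := by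
        have : offd (n+2) ν k = Real.sqrt ((Lr - ((k:ℝ)+1)) * ν * ((k:ℝ)+2)) := by
          unfold offd; rw [hLr]
        linarith [hstep1]
  _ ≤ (Lr - ((k:ℝ)+1)) * ν + ((k:ℝ)+1) := main
  _ = dg (n+2) ν k := by unfold dg; rw [hLr]

lemma quad_lower (n : ℕ) {ν : ℝ} (hν : 9 * ((n:ℝ) + 2)^2 < ν) (x : Fin (n+2) → ℝ)
    (hx : x (Fin.last (n+1)) = 0) :
    C (n+2) ν * (x ⬝ᵥ x) ≤ x ⬝ᵥ (S (n+2) ν *ᵥ x) := by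
  rw [quad_eq]
  have hxx : x ⬝ᵥ x = ∑ i : Fin (n+2), x i ^ 2 := by
    simp only [dotProduct]
    exact Finset.sum_congr rfl fun i _ => by ring
  rw [hxx, Finset.mul_sum]
  have R1 : ∑ i : Fin (n+2), (if (i:ℕ) ≤ n then offd (n+2) ν (i:ℕ) else 0) * x i ^ 2
      = ∑ p : Fin (n+1), offd (n+2) ν (p:ℕ) * x p.castSucc ^ 2 := by
    rw [Fin.sum_univ_castSucc]
    rw [show ((Fin.last (n+1) : Fin (n+2)):ℕ) = n+1 from Fin.val_last _]
    rw [if_neg (by omega), zero_mul, add_zero]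
    exact Finset.sum_congr rfl fun p _ => by
      rw [Fin.coe_castSucc, if_pos (by have := p.isLt; omega)]
  have R2 : ∑ i : Fin (n+2), (if (i:ℕ) = 0 then 0 else offd (n+2) ν ((i:ℕ)-1)) * x i ^ 2
      = ∑ p : Fin (n+1), offd (n+2) ν (p:ℕ) * x p.succ ^ 2 := by
    rw [Fin.sum_univ_succ]
    rw [show (((0 : Fin (n+2))):ℕ) = 0 from rfl, if_pos rfl, zero_mul, zero_add]
    exact Finset.sum_congr rfl fun p _ => by
      rw [Fin.val_succ, if_neg (by omega), Nat.add_sub_cancel]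
  have key : ∑ p : Fin (n+1), 2 * offd (n+2) ν (p:ℕ) * (x p.castSucc * x p.succ)
      ≤ ∑ i : Fin (n+2), (dg (n+2) ν (i:ℕ) - C (n+2) ν) * x i ^ 2 := by
    calc ∑ p : Fin (n+1), 2 * offd (n+2) ν (p:ℕ) * (x p.castSucc * x p.succ)
        ≤ ∑ p : Fin (n+1), offd (n+2) ν (p:ℕ) * (x p.castSucc ^ 2 + x p.succ ^ 2) :=
          Finset.sum_le_sum fun p _ => by
            nlinarith [offd_nonneg (n+2) ν (p:ℕ), sq_nonneg (x p.castSucc - x p.succ),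
              sq_nonneg (x p.castSucc + x p.succ)]
    _ = (∑ p : Fin (n+1), offd (n+2) ν (p:ℕ) * x p.castSucc ^ 2)
          + ∑ p : Fin (n+1), offd (n+2) ν (p:ℕ) * x p.succ ^ 2 := by
          rw [← Finset.sum_add_distrib]
          exact Finset.sum_congr rfl fun p _ => by ring
    _ = (∑ i : Fin (n+2), (if (i:ℕ) ≤ n then offd (n+2) ν (i:ℕ) else 0) * x i ^ 2)
          + ∑ i : Fin (n+2), (if (i:ℕ) = 0 then 0 else offd (n+2) ν ((i:ℕ)-1)) * x i ^ 2 := by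
          rw [R1, R2]
    _ = ∑ i : Fin (n+2), ((if (i:ℕ) ≤ n then offd (n+2) ν (i:ℕ) else 0)
          + (if (i:ℕ) = 0 then 0 else offd (n+2) ν ((i:ℕ)-1))) * x i ^ 2 := by
          rw [← Finset.sum_add_distrib]
          exact Finset.sum_congr rfl fun i _ => by ring
    _ ≤ ∑ i : Fin (n+2), (dg (n+2) ν (i:ℕ) - C (n+2) ν) * x i ^ 2 := by
          refine Finset.sum_le_sum fun i _ => ?_
          by_cases hi : (i:ℕ) ≤ n
          · refine mul_le_mul_of_nonneg_right ?_ (sq_nonneg _)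
            rw [if_pos hi]
            linarith [coeff_bound n hν hi]
          · have hilast : i = Fin.last (n+1) := Fin.ext (by have := i.isLt; simp; omega)
            rw [hilast, hx]
            simp
  have expand : ∑ i : Fin (n+2), (dg (n+2) ν (i:ℕ) - C (n+2) ν) * x i ^ 2
      = (∑ i : Fin (n+2), dg (n+2) ν (i:ℕ) * x i ^ 2)
        - ∑ i : Fin (n+2), C (n+2) ν * x i ^ 2 := by
    rw [← Finset.sum_sub_distrib]
    exact Finset.sum_congr rfl fun i _ => by ring
  linarith [key, expand.le, expand.ge]

end BDGersh

open BDGersh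

/-- Let `L ≥ 2` and let `0 < α_1(ν) < ⋯ < α_L(ν)` denote the (real, distinct,
strictly positive) eigenvalues of `A(ν)`, for `ν > 0`.  Then there exists
`ν₀ > 0` such that for all `ν > ν₀`:
`α_1(ν) ≤ L + √(Lν)` and
`α_i(ν) ≥ (L−1) + ν − √ν (√L + √(2(L−1)))` for every `i = 2, …, L`. -/
theorem birthDeathMat_gershgorin_eigenvalue_bounds (L : ℕ) (hL : 2 ≤ L)
    (α : ℝ → Fin L → ℝ)
    (hα : ∀ ν : ℝ, 0 < ν → StrictMono (α ν) ∧ (∀ i, 0 < α ν i) ∧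
      spectrum ℝ (birthDeathMat L ν) = Set.range (α ν)) :
    ∃ ν₀ : ℝ, 0 < ν₀ ∧ ∀ ν : ℝ, ν₀ < ν →
      α ν ⟨0, by omega⟩ ≤ (L : ℝ) + Real.sqrt ((L : ℝ) * ν) ∧
      ∀ i : Fin L, 0 < (i : ℕ) →
        ((L : ℝ) - 1) + ν - Real.sqrt ν * (Real.sqrt (L : ℝ)
          + Real.sqrt (2 * ((L : ℝ) - 1))) ≤ α ν i := by

  obtain ⟨n, rfl⟩ : ∃ n, L = n + 2 := ⟨L - 2, by omega⟩
  refine ⟨9 * ((n:ℝ) + 2)^2, by positivity, fun ν hν => ?_⟩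
  have hν0 : (0:ℝ) < ν := lt_trans (by positivity) hν
  obtain ⟨hmono, hpos, hspec⟩ := hα ν hν0
  have hspecS : spectrum ℝ (S (n+2) ν) = Set.range (α ν) :=
    (spec_S_eq (n+2) hν0).trans hspec
  constructor
  · -- upper bound on the smallest eigenvalue
    by_contra hcon
    push_neg at hcon
    have hdiag : S (n+2) ν (Fin.last (n+1)) (Fin.last (n+1)) < ((n+2:ℕ):ℝ) + Real.sqrt (((n+2:ℕ):ℝ) * ν) := by
      have h1 : S (n+2) ν (Fin.last (n+1)) (Fin.last (n+1)) = (n:ℝ) + 2 := by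
        simp only [S, Matrix.of_apply, if_pos rfl, dg, Fin.val_last]
        push_cast; ring
      have h2 : 0 < Real.sqrt (((n+2:ℕ):ℝ) * ν) := Real.sqrt_pos.mpr (by positivity)
      rw [h1]; push_cast; push_cast at h2; linarith
    obtain ⟨s, hsmem, hslt⟩ := herm_small (S_herm (n+2) ν) _ _ hdiag
    rw [hspecS] at hsmem
    obtain ⟨i, rfl⟩ := hsmem
    have hle : α ν ⟨0, by omega⟩ ≤ α ν i := hmono.monotone (by simp [Fin.le_def])
    linarith
  · -- lower bound on the other eigenvalues
    intro i hi
    by_contra hcon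
    push_neg at hcon
    have hconC : α ν i < C (n+2) ν := by unfold C; exact hcon
    have h0i : (⟨0, by omega⟩ : Fin (n+2)) < i := by rw [Fin.lt_def]; exact hi
    have hab : α ν ⟨0, by omega⟩ < α ν i := hmono h0i
    have haC : α ν ⟨0, by omega⟩ < C (n+2) ν := lt_trans hab hconC
    obtain ⟨v, hv0, hv⟩ := eig_vec (hspecS ▸ Set.mem_range_self _ :
      α ν ⟨0, by omega⟩ ∈ spectrum ℝ (S (n+2) ν))
    obtain ⟨w, hw0, hw⟩ := eig_vec (hspecS ▸ Set.mem_range_self _ :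
      α ν i ∈ spectrum ℝ (S (n+2) ν))
    have hvw : v ⬝ᵥ w = 0 := orth (S_transpose (n+2) ν) hv hw (ne_of_lt hab)
    have hwv : w ⬝ᵥ v = 0 := by rw [dotProduct_comm]; exact hvw
    have hV : 0 < v ⬝ᵥ v := dot_pos hv0
    have hW : 0 < w ⬝ᵥ w := dot_pos hw0
    set a := α ν ⟨0, by omega⟩ with ha
    set b := α ν i with hb
    set vL := v (Fin.last (n+1)) with hvL
    set wL := w (Fin.last (n+1)) with hwL
    by_cases hu0 : wL • v - vL • w = 0
    · -- degenerate case: both last coordinates vanish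
      have h1 : wL • v = vL • w := by rwa [sub_eq_zero] at hu0
      have hwL0 : wL = 0 := by
        have h2 : (wL • v) ⬝ᵥ v = (vL • w) ⬝ᵥ v := by rw [h1]
        rw [smul_dotProduct, smul_dotProduct, hwv] at h2
        simp only [smul_eq_mul, mul_zero] at h2
        exact (mul_eq_zero.mp h2).resolve_right hV.ne'
      have hvL0 : vL = 0 := by
        have h2 : vL • w = 0 := by rw [← h1, hwL0, zero_smul]
        rcases smul_eq_zero.mp h2 with h | h
        · exact h
        · exact absurd h hw0
      have hq := quad_lower n hν v hvL0
      have hvq : v ⬝ᵥ (S (n+2) ν *ᵥ v) = a * (v ⬝ᵥ v) := by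
        rw [hv, dotProduct_smul]; simp
      rw [hvq] at hq
      nlinarith [hq, hV, haC]
    · -- main case
      set u := wL • v - vL • w with hudef
      have huL : u (Fin.last (n+1)) = 0 := by
        rw [hudef]
        simp only [Pi.sub_apply, Pi.smul_apply, smul_eq_mul, ← hvL, ← hwL]
        ring
      have hq := quad_lower n hν u huL
      have hSu : S (n+2) ν *ᵥ u = wL • (a • v) - vL • (b • w) := by
        rw [hudef, Matrix.mulVec_sub, Matrix.mulVec_smul, Matrix.mulVec_smul, hv, hw]
      have huu : u ⬝ᵥ u = wL^2 * (v ⬝ᵥ v) + vL^2 * (w ⬝ᵥ w) := by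
        rw [hudef]
        simp only [sub_dotProduct, dotProduct_sub, smul_dotProduct,
          dotProduct_smul, smul_eq_mul, hvw, hwv, mul_zero]
        ring
      have huSu : u ⬝ᵥ (S (n+2) ν *ᵥ u) = a * (wL^2 * (v ⬝ᵥ v)) + b * (vL^2 * (w ⬝ᵥ w)) := by
        rw [hSu, hudef]
        simp only [sub_dotProduct, dotProduct_sub, smul_dotProduct,
          dotProduct_smul, smul_eq_mul, hvw, hwv, mul_zero]
        ring
      rw [huSu, huu] at hq
      have hPQ : 0 < wL^2 * (v ⬝ᵥ v) + vL^2 * (w ⬝ᵥ w) := by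
        have := dot_pos hu0
        rw [huu] at this
        exact this
      nlinarith [hq, hPQ, mul_pos (sub_pos.mpr hconC) hPQ,
        mul_nonneg (mul_nonneg (sq_nonneg wL) hV.le) (sub_nonneg.mpr hab.le),
        mul_nonneg (sq_nonneg wL) hV.le, mul_nonneg (sq_nonneg vL) hW.le]
end

section
/- Define m(ν) := Σ_{i=1}^{L} 1/α_i(ν) (which, by the Karlin–McGregor/Keilson theorem, equals the mean escape time E T_{L,0}(ν) of the birth–death process from state L to the absorbing state 0). Then lim_{ν→∞} α_1(ν)·m(ν) = 1, and lim_{ν→∞} α_i(ν)·m(ν) = ∞ for every i = 2, …, L. -/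
open Filter

open Polynomial Matrix

section BDaux

/-- eventual lower bound for polynomials positive on `(0,∞)`. -/
lemma poly_eventual_lb (p : ℝ[X]) (hp : ∀ x : ℝ, 0 < x → 0 < p.eval x) :
    ∃ c : ℝ, 0 < c ∧ ∀ᶠ x : ℝ in atTop, c ≤ p.eval x := by
  by_cases hdeg : 0 < p.degree
  · rcases le_or_gt 0 p.leadingCoeff with hlc | hlc
    · have := p.tendsto_atTop_of_leadingCoeff_nonneg hdeg hlc
      exact ⟨1, one_pos, this.eventually_ge_atTop 1⟩
    · have hbot := p.tendsto_atBot_of_leadingCoeff_nonpos hdeg hlc.le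
      have h1 : ∀ᶠ x : ℝ in atTop, p.eval x < 0 := hbot.eventually_lt_atBot 0
      have h2 : ∀ᶠ x : ℝ in atTop, (0:ℝ) < x := eventually_gt_atTop 0
      obtain ⟨x, hx1, hx2⟩ := (h1.and h2).exists
      exact absurd (hp x hx2) (not_lt.mpr hx1.le)
  · have hc := Polynomial.eq_C_of_degree_le_zero (not_lt.mp hdeg)
    refine ⟨p.eval 1, hp 1 one_pos, ?_⟩
    filter_upwards with x
    rw [hc]; simp

variable {n : Type*} [Fintype n] [DecidableEq n]

lemma eval_charpoly' (M : Matrix n n ℝ) (x : ℝ) :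
    (M.charpoly).eval x = ((x • (1 : Matrix n n ℝ)) - M).det := by
  rw [Matrix.charpoly, ← coe_evalRingHom, RingHom.map_det]
  congr 1
  ext i j
  by_cases h : i = j
  · subst h
    simp [charmatrix_apply_eq, Matrix.one_apply, Matrix.map_apply]
  · simp [charmatrix_apply_ne _ _ _ (Ne.symm h), Matrix.one_apply, Ne.symm h, h,
      Matrix.map_apply]

lemma isRoot_charpoly_of_mem_spectrum {M : Matrix n n ℝ} {x : ℝ}
    (hx : x ∈ spectrum ℝ M) : M.charpoly.IsRoot x := by
  rw [spectrum.mem_iff] at hx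
  rw [Polynomial.IsRoot, eval_charpoly']
  by_contra hdet
  exact hx <| (Matrix.isUnit_iff_isUnit_det _).mpr
    (by simpa [Algebra.algebraMap_eq_smul_one] using (isUnit_iff_ne_zero.mpr hdet))

lemma charpoly_eq_prod {M : Matrix n n ℝ} {β : n → ℝ}
    (hinj : Function.Injective β) (hspec : spectrum ℝ M = Set.range β) :
    M.charpoly = ∏ i, (X - C (β i)) := by
  classical
  set T : Multiset ℝ := Finset.univ.val.map β with hT
  have hTnodup : T.Nodup := Multiset.Nodup.map hinj Finset.univ.nodup
  have hp0 : M.charpoly ≠ 0 := (Matrix.charpoly_monic M).ne_zero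
  have hroots : ∀ x ∈ T, M.charpoly.IsRoot x := by
    intro x hx
    apply isRoot_charpoly_of_mem_spectrum (M := M)
    rw [hspec]
    rcases Multiset.mem_map.mp hx with ⟨i, _, rfl⟩
    exact Set.mem_range_self i
  have hle : T ≤ M.charpoly.roots := by
    rw [Multiset.le_iff_count]
    intro a
    by_cases ha : a ∈ T
    · rw [Multiset.count_eq_one_of_mem hTnodup ha]
      rw [Nat.one_le_iff_ne_zero, Ne, Multiset.count_eq_zero, not_not]
      exact Polynomial.mem_roots'.mpr ⟨hp0, hroots a ha⟩
    · rw [Multiset.count_eq_zero_of_notMem ha]; exact Nat.zero_le _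
  have hTcard : Multiset.card T = Fintype.card n := by
    simp [hT]
  have hcard : Multiset.card M.charpoly.roots = M.charpoly.natDegree := by
    refine le_antisymm (Polynomial.card_roots' _) ?_
    rw [Matrix.charpoly_natDegree_eq_dim, ← hTcard]
    exact Multiset.card_le_card hle
  have hsplits : M.charpoly.Splits :=
    (Polynomial.splits_iff_card_roots).mpr hcard
  have hroots_eq : M.charpoly.roots = T := by
    refine (Multiset.eq_of_le_of_card_le hle ?_).symm
    rw [hTcard, hcard, Matrix.charpoly_natDegree_eq_dim]
  rw [hsplits.eq_prod_roots_of_monic (Matrix.charpoly_monic M),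
    hroots_eq, hT, Multiset.map_map]
  rfl

lemma det_eq_prod_of_spectrum {M : Matrix n n ℝ} {β : n → ℝ}
    (hinj : Function.Injective β) (hspec : spectrum ℝ M = Set.range β) :
    M.det = ∏ i, β i := by
  rw [Matrix.det_eq_sign_charpoly_coeff, charpoly_eq_prod hinj hspec,
    Polynomial.coeff_zero_eq_eval_zero, Polynomial.eval_prod]
  have hev : ∀ i : n, eval 0 (X - C (β i)) = -1 * β i := by intro i; simp
  rw [Finset.prod_congr rfl fun i _ => hev i, Finset.prod_mul_distrib, Finset.prod_const,
    Finset.card_univ, ← mul_assoc, ← pow_add, ← two_mul, pow_mul]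
  simp

lemma trace_eq_sum_of_spectrum [Nonempty n] {M : Matrix n n ℝ} {β : n → ℝ}
    (hinj : Function.Injective β) (hspec : spectrum ℝ M = Set.range β) :
    M.trace = ∑ i, β i := by
  rw [Matrix.trace_eq_neg_charpoly_coeff, charpoly_eq_prod hinj hspec]
  have h0 : 0 < Finset.univ.card (α := n) := Finset.card_pos.mpr Finset.univ_nonempty
  have hcard : Fintype.card n - 1 = Finset.univ.card (α := n) - 1 := rfl
  rw [hcard, Polynomial.prod_X_sub_C_coeff_card_pred Finset.univ β h0, neg_neg]

noncomputable def bdPolyMat (L : ℕ) : Matrix (Fin L) (Fin L) ℝ[X] :=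
  Matrix.of fun i j =>
    if j = i then C ((L : ℝ) - ((i : ℕ) + 1)) * X + C (((i : ℕ) + 1 : ℝ))
    else if (j : ℕ) = (i : ℕ) + 1 then -(C ((L : ℝ) - ((i : ℕ) + 1)) * X)
    else if (j : ℕ) + 1 = (i : ℕ) then -(C ((i : ℕ) + 1 : ℝ))
    else 0

lemma bdPolyMat_map (L : ℕ) (ν : ℝ) :
    (bdPolyMat L).map (evalRingHom ν) = birthDeathMat L ν := by
  ext i j
  simp only [bdPolyMat, birthDeathMat, Matrix.map_apply, Matrix.of_apply]
  split_ifs <;> simp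

lemma det_birthDeathMat_eval (L : ℕ) (ν : ℝ) :
    (birthDeathMat L ν).det = ((bdPolyMat L).det).eval ν := by
  rw [← bdPolyMat_map L ν]
  have := RingHom.map_det (evalRingHom ν) (bdPolyMat L)
  rw [RingHom.mapMatrix_apply] at this
  rw [← this]
  rfl

lemma bd_rowsum (L : ℕ) (ν : ℝ) (i : Fin L) :
    ∑ j, birthDeathMat L ν i j = if (i : ℕ) = 0 then 1 else 0 := by
  have key : ∀ j : Fin L, birthDeathMat L ν i j =
      (if (j : ℕ) = (i : ℕ) then ((L : ℝ) - ((i : ℕ) + 1)) * ν + ((i : ℕ) + 1) else 0)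
      + (if (j : ℕ) = (i : ℕ) + 1 then -(((L : ℝ) - ((i : ℕ) + 1)) * ν) else 0)
      + (if (j : ℕ) + 1 = (i : ℕ) then -(((i : ℕ) + 1 : ℝ)) else 0) := by
    intro j
    simp only [birthDeathMat, Matrix.of_apply]
    have hji : j = i ↔ (j : ℕ) = (i : ℕ) := ⟨fun h => by rw [h], fun h => Fin.ext h⟩
    split_ifs with h1 h2 h3 <;> simp_all <;> omega
  rw [Finset.sum_congr rfl fun j _ => key j]
  rw [Finset.sum_add_distrib, Finset.sum_add_distrib]
  rw [Fin.sum_univ_eq_sum_range (fun k => if k = (i:ℕ) then ((L : ℝ) - ((i : ℕ) + 1)) * ν + ((i : ℕ) + 1) else 0)]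
  rw [Fin.sum_univ_eq_sum_range (fun k => if k = (i:ℕ)+1 then -(((L : ℝ) - ((i : ℕ) + 1)) * ν) else 0)]
  rw [Fin.sum_univ_eq_sum_range (fun k => if k+1 = (i:ℕ) then -(((i : ℕ) + 1 : ℝ)) else 0)]
  rw [Finset.sum_ite_eq' (Finset.range L) (i:ℕ)]
  rw [Finset.sum_ite_eq' (Finset.range L) ((i:ℕ)+1)]
  have h3 : ∑ k ∈ Finset.range L, (if k+1 = (i:ℕ) then -(((i : ℕ) + 1 : ℝ)) else 0)
      = if (i:ℕ) = 0 then 0 else -(((i : ℕ) + 1 : ℝ)) := by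
    rcases Nat.eq_zero_or_eq_succ_pred (i : ℕ) with h | h
    · rw [h]; simp
    · rw [if_neg (by omega)]
      have : ∀ k, k + 1 = (i:ℕ) ↔ k = (i:ℕ) - 1 := by omega
      simp only [this]
      rw [Finset.sum_ite_eq' (Finset.range L) ((i:ℕ)-1)]
      rw [if_pos (Finset.mem_range.mpr (by omega))]
  rw [h3, if_pos (Finset.mem_range.mpr i.isLt)]
  by_cases hiL : (i:ℕ)+1 < L
  · rw [if_pos (Finset.mem_range.mpr hiL)]
    by_cases h0 : (i:ℕ) = 0 <;> simp [h0] <;> ring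
  · rw [if_neg (fun hmem => hiL (Finset.mem_range.mp hmem))]
    have hiL' : (i:ℕ)+1 = L := by omega
    have hc : ((i:ℕ):ℝ) + 1 = (L:ℝ) := by exact_mod_cast hiL'
    have hz : ((L : ℝ) - ((i : ℕ) + 1)) = 0 := by linarith
    by_cases h0 : (i:ℕ) = 0
    · simp [h0, hz]
      left
      have hL1 : (L:ℝ) = 1 := by exact_mod_cast (by omega : L = 1)
      linarith
    · simp [h0, hz]

lemma bd_mulVec_one (L : ℕ) (ν : ℝ) :
    birthDeathMat L ν *ᵥ (fun _ => 1) = fun i : Fin L => if (i : ℕ) = 0 then (1:ℝ) else 0 := by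
  funext i
  simp only [Matrix.mulVec, dotProduct, mul_one]
  exact bd_rowsum L ν i

noncomputable def bdw (L : ℕ) (k : ℕ) : ℝ :=
  ((L-1).descFactorial k : ℝ) / ((k+1).factorial : ℝ)

lemma bdw_pos {L k : ℕ} (hk : k < L) : 0 < bdw L k := by
  unfold bdw
  apply div_pos
  · have : ¬ (L - 1 < k) := by omega
    have hne : (L-1).descFactorial k ≠ 0 := by
      rw [Ne, Nat.descFactorial_eq_zero_iff_lt]; exact this
    exact_mod_cast Nat.pos_of_ne_zero hne
  · exact_mod_cast (k+1).factorial_pos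

lemma bdw_zero (L : ℕ) : bdw L 0 = 1 := by
  unfold bdw; simp

lemma bdw_last (L : ℕ) (hL : 1 ≤ L) : bdw L (L-1) = 1 / L := by
  unfold bdw
  rw [Nat.descFactorial_self]
  have : L - 1 + 1 = L := by omega
  rw [this]
  rcases Nat.exists_eq_add_of_le hL with ⟨m, rfl⟩
  simp [Nat.factorial_succ, add_comm 1 m]
  rw [mul_comm]
  rw [div_mul_eq_div_div]
  have h2 : ((m+1).factorial : ℝ) ≠ 0 := by exact_mod_cast (m+1).factorial_pos.ne'
  field_simp

lemma bdw_succ (L k : ℕ) (hk : k + 1 < L) :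
    ((k:ℝ)+2) * bdw L (k+1) = ((L:ℝ) - ((k:ℝ)+1)) * bdw L k := by
  unfold bdw
  rw [Nat.descFactorial_succ]
  have h1 : ((L - 1 - k : ℕ) : ℝ) = (L:ℝ) - ((k:ℝ)+1) := by
    have h2 : L - 1 - k = L - (k+1) := by omega
    rw [h2, Nat.cast_sub (by omega)]
    push_cast; ring
  have h3 : (k+1+1).factorial = (k+2) * (k+1).factorial := rfl
  rw [h3]
  push_cast [h1]
  have h4 : ((k+1).factorial : ℝ) ≠ 0 := by exact_mod_cast (k+1).factorial_pos.ne'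
  field_simp

noncomputable def bdd (L : ℕ) (ν : ℝ) : Fin L → ℝ :=
  fun i => Real.sqrt (ν ^ (i:ℕ) * bdw L (i:ℕ))

noncomputable def bdS (L : ℕ) (ν : ℝ) : Matrix (Fin L) (Fin L) ℝ :=
  Matrix.of fun i j =>
    if j = i then ((L : ℝ) - ((i : ℕ) + 1)) * ν + ((i : ℕ) + 1)
    else if (j : ℕ) = (i : ℕ) + 1 then
      -Real.sqrt ((((L:ℝ) - (((i:ℕ):ℝ)+1)) * ν) * (((i:ℕ):ℝ)+2))
    else if (j : ℕ) + 1 = (i : ℕ) then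
      -Real.sqrt ((((L:ℝ) - (((j:ℕ):ℝ)+1)) * ν) * (((j:ℕ):ℝ)+2))
    else 0

lemma bdS_isHermitian (L : ℕ) (ν : ℝ) : (bdS L ν).IsHermitian := by
  rw [Matrix.IsHermitian, conjTranspose_eq_transpose_of_trivial]
  ext i j
  simp only [Matrix.transpose_apply, bdS, Matrix.of_apply]
  by_cases h1 : i = j
  · subst h1; rfl
  · have h1' : ¬ j = i := fun h => h1 h.symm
    rw [if_neg h1, if_neg h1']
    by_cases h2 : (i:ℕ) = (j:ℕ) + 1
    · rw [if_pos h2, if_neg (by omega : ¬ ((j:ℕ) = (i:ℕ) + 1)),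
        if_pos (by omega : (j:ℕ) + 1 = (i:ℕ))]
    · rw [if_neg h2]
      by_cases h3 : (i:ℕ) + 1 = (j:ℕ)
      · rw [if_pos h3, if_pos (by omega : (j:ℕ) = (i:ℕ) + 1)]
      · rw [if_neg h3, if_neg (by omega : ¬ ((j:ℕ) = (i:ℕ) + 1)),
        if_neg (by omega : ¬ ((j:ℕ) + 1 = (i:ℕ)))]

lemma key2 (L k : ℕ) (ν : ℝ) (hν : 0 ≤ ν) (hk : k + 1 < L) :
    ((L:ℝ) - ((k:ℝ)+1)) * ν * Real.sqrt (ν^k * bdw L k)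
      = Real.sqrt ((((L:ℝ) - ((k:ℝ)+1)) * ν) * (((k:ℝ))+2))
        * Real.sqrt (ν^(k+1) * bdw L (k+1)) := by
  have ha : (0:ℝ) ≤ (L:ℝ) - ((k:ℝ)+1) := by
    have : (k:ℝ) + 1 ≤ (L:ℝ) := by exact_mod_cast Nat.le_of_lt hk
    linarith
  have hw : (0:ℝ) ≤ bdw L (k+1) := (bdw_pos hk).le
  rw [← Real.sqrt_mul (by positivity)]
  have harg : (((L:ℝ) - ((k:ℝ)+1)) * ν) * (((k:ℝ))+2) * (ν^(k+1) * bdw L (k+1))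
      = (((L:ℝ) - ((k:ℝ)+1)) * ν)^2 * (ν^k * bdw L k) := by
    have hs := bdw_succ L k hk
    linear_combination (((L:ℝ) - ((k:ℝ)+1)) * ν * ν^k * ν) * hs
  rw [harg, Real.sqrt_mul (sq_nonneg _), Real.sqrt_sq (by positivity)]

lemma key3 (L k : ℕ) (ν : ℝ) (hν : 0 ≤ ν) (hk : k + 1 < L) :
    (((k:ℝ))+2) * Real.sqrt (ν^(k+1) * bdw L (k+1))
      = Real.sqrt ((((L:ℝ) - ((k:ℝ)+1)) * ν) * (((k:ℝ))+2))
        * Real.sqrt (ν^k * bdw L k) := by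
  have ha : (0:ℝ) ≤ (L:ℝ) - ((k:ℝ)+1) := by
    have : (k:ℝ) + 1 ≤ (L:ℝ) := by exact_mod_cast Nat.le_of_lt hk
    linarith
  have hw : (0:ℝ) ≤ bdw L k := (bdw_pos (by omega)).le
  rw [← Real.sqrt_mul (by positivity)]
  have hl : (((k:ℝ))+2) * Real.sqrt (ν^(k+1) * bdw L (k+1))
      = Real.sqrt ((((k:ℝ))+2)^2 * (ν^(k+1) * bdw L (k+1))) := by
    rw [Real.sqrt_mul (sq_nonneg _), Real.sqrt_sq (by positivity)]
  rw [hl]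
  congr 1
  have hs := bdw_succ L k hk
  linear_combination ((((k:ℝ))+2) * ν^(k+1)) * hs

lemma bd_conj (L : ℕ) (ν : ℝ) (hν : 0 ≤ ν) :
    Matrix.diagonal (bdd L ν) * birthDeathMat L ν
      = bdS L ν * Matrix.diagonal (bdd L ν) := by
  ext i j
  rw [Matrix.diagonal_mul, Matrix.mul_diagonal]
  simp only [birthDeathMat, bdS, Matrix.of_apply, bdd]
  by_cases h1 : j = i
  · subst h1; rw [if_pos rfl, if_pos rfl]; ring
  · rw [if_neg h1, if_neg h1]
    by_cases h2 : (j:ℕ) = (i:ℕ) + 1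
    · rw [if_pos h2, if_pos h2, h2]
      have hk : (i:ℕ) + 1 < L := by rw [← h2]; exact j.isLt
      have hthis := key2 L (i:ℕ) ν hν hk
      linear_combination (-1 : ℝ) * hthis
    · rw [if_neg h2, if_neg h2]
      by_cases h3 : (j:ℕ) + 1 = (i:ℕ)
      · rw [if_pos h3, if_pos h3, ← h3]
        have hk : (j:ℕ) + 1 < L := by rw [h3]; exact i.isLt
        have hthis := key3 L (j:ℕ) ν hν hk
        push_cast
        linear_combination (-1 : ℝ) * hthis
      · rw [if_neg h3, if_neg h3, mul_zero, zero_mul]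

lemma bdd_pos {L : ℕ} {ν : ℝ} (hν : 0 < ν) (i : Fin L) : 0 < bdd L ν i := by
  apply Real.sqrt_pos.mpr
  exact mul_pos (pow_pos hν _) (bdw_pos i.isLt)

lemma bdd_sq {L : ℕ} {ν : ℝ} (hν : 0 < ν) (i : Fin L) :
    bdd L ν i * bdd L ν i = ν ^ (i:ℕ) * bdw L (i:ℕ) :=
  Real.mul_self_sqrt (le_of_lt (mul_pos (pow_pos hν _) (bdw_pos i.isLt)))

lemma bd_rayleigh (L : ℕ) (hL : 1 ≤ L) (ν : ℝ) (hν : 0 < ν) (a : ℝ) (ha0 : 0 ≤ a)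
    (ha : ∀ x ∈ spectrum ℝ (birthDeathMat L ν), a ≤ x) :
    a * ν ^ (L-1) ≤ L := by
  classical
  set A := birthDeathMat L ν with hA
  set S := bdS L ν with hSdef
  set d := bdd L ν with hd
  -- diagonal d is a unit
  have hdet : (Matrix.diagonal d).det ≠ 0 := by
    rw [Matrix.det_diagonal]
    exact Finset.prod_ne_zero_iff.mpr fun i _ => (bdd_pos hν i).ne'
  have hu : IsUnit (Matrix.diagonal d) :=
    (Matrix.isUnit_iff_isUnit_det _).mpr (isUnit_iff_ne_zero.mpr hdet)
  -- S is conjugate of A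
  have hconj : S = (↑hu.unit : Matrix (Fin L) (Fin L) ℝ) * A
      * (↑hu.unit⁻¹ : Matrix (Fin L) (Fin L) ℝ) := by
    have h1 : (↑hu.unit : Matrix (Fin L) (Fin L) ℝ) * A
        = S * (↑hu.unit : Matrix (Fin L) (Fin L) ℝ) := by
      rw [hu.unit_spec]
      exact bd_conj L ν hν.le
    rw [h1, Units.mul_inv_cancel_right]
  have hspecS : spectrum ℝ S = spectrum ℝ A := by
    rw [hconj, spectrum.units_conjugate]
  -- spectral theorem for S
  have hH : S.IsHermitian := bdS_isHermitian L ν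
  set U : Matrix (Fin L) (Fin L) ℝ := ↑(hH.eigenvectorUnitary) with hU
  have hUU : U * star U = 1 := (Matrix.mem_unitaryGroup_iff).mp hH.eigenvectorUnitary.2
  have hspec_thm : S = U * Matrix.diagonal (RCLike.ofReal ∘ hH.eigenvalues) * star U :=
    hH.spectral_theorem
  -- positive semidefiniteness of S - a • 1
  have hmu : ∀ j, a ≤ hH.eigenvalues j := by
    intro j
    apply ha
    rw [← hspecS]
    exact hH.eigenvalues_mem_spectrum_real j
  have hpsd : (S - a • (1 : Matrix (Fin L) (Fin L) ℝ)).PosSemidef := by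
    have hdg : (Matrix.diagonal (fun j : Fin L => hH.eigenvalues j - a)).PosSemidef :=
      Matrix.PosSemidef.diagonal (fun j => sub_nonneg.mpr (hmu j))
    have := hdg.mul_mul_conjTranspose_same U
    have heq : U * (Matrix.diagonal (fun j : Fin L => hH.eigenvalues j - a)) * Uᴴ
        = S - a • 1 := by
      have hsplit : Matrix.diagonal (fun j : Fin L => hH.eigenvalues j - a)
          = Matrix.diagonal (RCLike.ofReal ∘ hH.eigenvalues)
            - a • (1 : Matrix (Fin L) (Fin L) ℝ) := by
        rw [Matrix.smul_one_eq_diagonal, ← Matrix.diagonal_sub]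
        rfl
      rw [hsplit, Matrix.mul_sub, Matrix.sub_mul, ← Matrix.star_eq_conjTranspose,
        ← hspec_thm]
      congr 1
      rw [Matrix.mul_smul, Matrix.smul_mul, mul_one, hUU]
    rwa [heq] at this
  -- apply quadratic form to d
  have hq := hpsd.dotProduct_mulVec_nonneg d
  have hstar : star d = d := by
    funext i; simp
  rw [hstar] at hq
  rw [Matrix.sub_mulVec, dotProduct_sub] at hq
  have hsmul : (a • (1 : Matrix (Fin L) (Fin L) ℝ)) *ᵥ d = a • d := by
    rw [Matrix.smul_mulVec, Matrix.one_mulVec]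
  rw [hsmul, dotProduct_smul] at hq
  -- compute S *ᵥ d
  have hone : Matrix.diagonal d *ᵥ (fun _ => (1:ℝ)) = d := by
    funext i
    rw [Matrix.mulVec_diagonal]
    exact mul_one _
  have hSd : S *ᵥ d = fun i : Fin L => d i * (if (i:ℕ) = 0 then (1:ℝ) else 0) := by
    have h1 : S *ᵥ (Matrix.diagonal d *ᵥ (fun _ => (1:ℝ)))
        = Matrix.diagonal d *ᵥ (A *ᵥ (fun _ => (1:ℝ))) := by
      rw [Matrix.mulVec_mulVec, Matrix.mulVec_mulVec, ← bd_conj L ν hν.le]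
    rw [hone] at h1
    rw [h1, bd_mulVec_one]
    funext i
    rw [Matrix.mulVec_diagonal]
  -- d ⬝ᵥ S *ᵥ d = 1
  have i0 : Fin L := ⟨0, hL⟩
  have hdS : d ⬝ᵥ (S *ᵥ d) = 1 := by
    rw [hSd]
    unfold dotProduct
    have hpt : ∀ i : Fin L, d i * (d i * (if (i:ℕ) = 0 then (1:ℝ) else 0))
        = if i = (⟨0, hL⟩ : Fin L) then d i * d i else 0 := by
      intro i
      by_cases h : (i:ℕ) = 0
      · rw [if_pos h, if_pos (Fin.ext h), mul_one]
      · rw [if_neg h, if_neg (fun he => h (by rw [he])), mul_zero, mul_zero]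
    rw [Finset.sum_congr rfl fun i _ => hpt i, Finset.sum_ite_eq' Finset.univ]
    rw [if_pos (Finset.mem_univ _), bdd_sq hν]
    simp [bdw_zero]
  rw [hdS] at hq
  -- d ⬝ᵥ d ≥ ν^(L-1)/L
  have hdd : ν ^ (L-1) / L ≤ d ⬝ᵥ d := by
    have hlast : d ⟨L-1, by omega⟩ * d ⟨L-1, by omega⟩ = ν ^ (L-1) / L := by
      rw [bdd_sq hν]
      rw [show ((⟨L-1, by omega⟩ : Fin L) : ℕ) = L - 1 from rfl, bdw_last L hL]
      ring
    calc ν ^ (L-1) / L = d ⟨L-1, by omega⟩ * d ⟨L-1, by omega⟩ := hlast.symm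
    _ ≤ ∑ i, d i * d i := by
        apply Finset.single_le_sum (f := fun i : Fin L => d i * d i)
        · intro i _
          exact mul_self_nonneg _
        · exact Finset.mem_univ _
    _ = d ⬝ᵥ d := rfl
  -- combine
  have h2 : a * (ν ^ (L-1) / L) ≤ 1 := by
    calc a * (ν ^ (L-1) / L) ≤ a * (d ⬝ᵥ d) := by
          apply mul_le_mul_of_nonneg_left hdd ha0
    _ ≤ 1 := by
          have := hq
          simp only [smul_eq_mul] at this
          linarith
  have hLpos : (0:ℝ) < L := by exact_mod_cast hL
  calc a * ν ^ (L-1) = (a * (ν ^ (L-1) / L)) * L := by field_simp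
  _ ≤ 1 * L := by apply mul_le_mul_of_nonneg_right h2 hLpos.le
  _ = L := one_mul _

end BDaux

/-- Let `0 < α_1(ν) < ⋯ < α_L(ν)` denote the (real, distinct, strictly
positive) eigenvalues of `A(ν)`, for `ν > 0`, and let
`m(ν) := Σ_{i=1}^L 1/α_i(ν)` (the mean escape time `E T_{L,0}(ν)`).  Then
`lim_{ν→∞} α_1(ν)·m(ν) = 1` and `lim_{ν→∞} α_i(ν)·m(ν) = ∞` for `i = 2,…,L`. -/
theorem birthDeathMat_eigenvalue_meanEscape_limits (L : ℕ) (hL : 1 ≤ L)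
    (α : ℝ → Fin L → ℝ)
    (hα : ∀ ν : ℝ, 0 < ν → StrictMono (α ν) ∧ (∀ i, 0 < α ν i) ∧
      spectrum ℝ (birthDeathMat L ν) = Set.range (α ν)) :
    Tendsto (fun ν : ℝ => α ν ⟨0, by omega⟩ * ∑ i : Fin L, (α ν i)⁻¹)
        atTop (nhds 1) ∧
    ∀ i : Fin L, 0 < (i : ℕ) →
      Tendsto (fun ν : ℝ => α ν i * ∑ j : Fin L, (α ν j)⁻¹) atTop atTop := by
  classical
  by_cases hL1 : L = 1
  · subst hL1
    constructor
    · have hcong : ∀ᶠ ν : ℝ in atTop,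
          (1:ℝ) = α ν ⟨0, by omega⟩ * ∑ i : Fin 1, (α ν i)⁻¹ := by
        filter_upwards [eventually_gt_atTop (0:ℝ)] with ν hν
        rw [Fin.sum_univ_one]
        have h0 : (0 : Fin 1) = ⟨0, by omega⟩ := rfl
        rw [← h0, mul_inv_cancel₀ ((hα ν hν).2.1 0).ne']
      exact Tendsto.congr' hcong tendsto_const_nhds
    · intro i hi
      have := i.isLt
      omega
  · have hL2 : 2 ≤ L := by omega
    set i₀ : Fin L := ⟨0, by omega⟩ with hi₀
    set i₁ : Fin L := ⟨1, by omega⟩ with hi₁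
    haveI : Nonempty (Fin L) := ⟨i₀⟩
    -- determinant polynomial lower bound
    obtain ⟨c₀, hc₀pos, hc₀ev⟩ := poly_eventual_lb (bdPolyMat L).det (by
      intro ν hν
      rw [← det_birthDeathMat_eval]
      rw [det_eq_prod_of_spectrum (hα ν hν).1.injective (hα ν hν).2.2]
      exact Finset.prod_pos fun i _ => (hα ν hν).2.1 i)
    set K : ℝ := 2 * (L:ℝ)^2 with hK
    have hKpos : 0 < K := by positivity
    set C₄ : ℝ := (L:ℝ)^2 * K^(L-2) with hC₄
    have hC₄pos : 0 < C₄ := by positivity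
    -- the central per-ν estimates
    have main : ∀ ν : ℝ, 1 ≤ ν → c₀ ≤ (bdPolyMat L).det.eval ν →
        (1 ≤ α ν i₀ * ∑ j, (α ν j)⁻¹ ∧
         α ν i₀ * ∑ j, (α ν j)⁻¹ ≤ 1 + ((L:ℝ) - 1) * C₄ / c₀ / ν ∧
         c₀ / C₄ * ν ≤ α ν i₁ * ∑ j, (α ν j)⁻¹) := by
      intro ν hν1 hcν
      have hν0 : (0:ℝ) < ν := lt_of_lt_of_le one_pos hν1
      obtain ⟨hsm, hpos, hspec⟩ := hα ν hν0
      set a := α ν i₀ with ha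
      set b := α ν i₁ with hb
      set m := ∑ j, (α ν j)⁻¹ with hm
      have hapos : 0 < a := hpos i₀
      have hbpos : 0 < b := hpos i₁
      have hmin : ∀ j : Fin L, a ≤ α ν j := by
        intro j
        exact hsm.monotone (by rw [Fin.le_def]; exact Nat.zero_le _)
      have hsec : ∀ j : Fin L, j ≠ i₀ → b ≤ α ν j := by
        intro j hj
        apply hsm.monotone
        have : (j : ℕ) ≠ 0 := fun h => hj (Fin.ext h)
        simp only [Fin.le_def, hi₁]
        omega
      -- trace bound
      have htrace : ∑ j, α ν j = (birthDeathMat L ν).trace :=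
        (trace_eq_sum_of_spectrum hsm.injective hspec).symm
      have htr_le : (birthDeathMat L ν).trace ≤ K * ν := by
        have hdiag : ∀ i : Fin L, (birthDeathMat L ν).diag i ≤ (L:ℝ) * ν + L := by
          intro i
          show birthDeathMat L ν i i ≤ _
          simp only [birthDeathMat, Matrix.of_apply, if_pos rfl, if_true]
          have h1 : ((i:ℕ):ℝ) + 1 ≤ L := by exact_mod_cast i.isLt
          have h2 : (0:ℝ) ≤ ((i:ℕ):ℝ) := by positivity
          nlinarith
        calc (birthDeathMat L ν).trace ≤ ∑ _i : Fin L, ((L:ℝ) * ν + L) :=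
              Finset.sum_le_sum fun i _ => hdiag i
        _ = (L:ℝ) * ((L:ℝ) * ν + L) := by
              rw [Finset.sum_const, Finset.card_univ, Fintype.card_fin, nsmul_eq_mul]
        _ ≤ K * ν := by rw [hK]; nlinarith [hL2, (by exact_mod_cast hL2 : (2:ℝ) ≤ L)]
      have hle_all : ∀ j : Fin L, α ν j ≤ K * ν := by
        intro j
        calc α ν j ≤ ∑ j', α ν j' :=
              Finset.single_le_sum (fun j' _ => (hpos j').le) (Finset.mem_univ j)
        _ ≤ K * ν := htrace ▸ htr_le
      -- Rayleigh bound
      have hray : a * ν ^ (L-1) ≤ L := by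
        apply bd_rayleigh L hL ν hν0 a hapos.le
        intro x hx
        rw [hspec] at hx
        obtain ⟨j, rfl⟩ := hx
        exact hmin j
      -- product bound
      have hne10 : i₁ ≠ i₀ := by
        simp only [hi₀, hi₁, Ne, Fin.mk.injEq]
        omega
      have hmem1 : i₁ ∈ Finset.univ.erase i₀ :=
        Finset.mem_erase.mpr ⟨hne10, Finset.mem_univ _⟩
      have hprodsplit : ∏ j, α ν j
          = a * (b * ∏ j ∈ (Finset.univ.erase i₀).erase i₁, α ν j) := by
        rw [← Finset.mul_prod_erase Finset.univ _ (Finset.mem_univ i₀),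
            ← Finset.mul_prod_erase _ _ hmem1]
      have hcard2 : ((Finset.univ.erase i₀).erase i₁).card = L - 2 := by
        rw [Finset.card_erase_of_mem hmem1,
          Finset.card_erase_of_mem (Finset.mem_univ i₀), Finset.card_univ, Fintype.card_fin]
        omega
      have hrest : ∏ j ∈ (Finset.univ.erase i₀).erase i₁, α ν j ≤ (K*ν)^(L-2) := by
        have h1 := Finset.prod_le_prod (s := (Finset.univ.erase i₀).erase i₁)
          (fun j _ => (hpos j).le) (fun j _ => hle_all j)
        rwa [Finset.prod_const, hcard2] at h1
      have hprodc : c₀ ≤ a * b * (K*ν)^(L-2) := by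
        have hdet : (bdPolyMat L).det.eval ν = ∏ j, α ν j := by
          rw [← det_birthDeathMat_eval, det_eq_prod_of_spectrum hsm.injective hspec]
        calc c₀ ≤ ∏ j, α ν j := by rw [← hdet]; exact hcν
        _ = a * (b * ∏ j ∈ (Finset.univ.erase i₀).erase i₁, α ν j) := hprodsplit
        _ ≤ a * (b * (K*ν)^(L-2)) := by
              apply mul_le_mul_of_nonneg_left _ hapos.le
              exact mul_le_mul_of_nonneg_left hrest hbpos.le
        _ = a * b * (K*ν)^(L-2) := by ring
      -- power juggling
      have hsplitpow : ν^(L-1) * ν^(L-1) = ν^(L-2) * ν^L := by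
        rw [← pow_add, ← pow_add]
        congr 1
        omega
      have hνL : ν ≤ ν^L := le_self_pow₀ hν1 (by omega)
      have hνLpos : 0 < ν^L := pow_pos hν0 L
      have hpowpos : (0:ℝ) < (K*ν)^(L-2) := pow_pos (by positivity) _
      -- hQ : a^2 * (K*ν)^(L-2) * ν^L ≤ C₄
      have hQ : a^2 * (K*ν)^(L-2) * ν^L ≤ C₄ := by
        have e1 : a^2 * (K*ν)^(L-2) * ν^L = (a*ν^(L-1))^2 * K^(L-2) := by
          rw [mul_pow]
          calc a^2 * (K^(L-2) * ν^(L-2)) * ν^L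
              = (a*a) * (ν^(L-2) * ν^L) * K^(L-2) := by ring
          _ = (a*a) * (ν^(L-1) * ν^(L-1)) * K^(L-2) := by rw [hsplitpow]
          _ = (a*ν^(L-1))^2 * K^(L-2) := by ring
        rw [e1, hC₄]
        apply mul_le_mul_of_nonneg_right _ (by positivity)
        have h2 : 0 ≤ a * ν^(L-1) := by positivity
        nlinarith
      -- hBA : c₀ * ν^L * a ≤ b * C₄
      have hBA : c₀ * ν^L * a ≤ b * C₄ := by
        have h1 : c₀ * (ν^L * a) ≤ (a * b * (K*ν)^(L-2)) * (ν^L * a) :=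
          mul_le_mul_of_nonneg_right hprodc (by positivity)
        calc c₀ * ν^L * a = c₀ * (ν^L * a) := by ring
        _ ≤ (a * b * (K*ν)^(L-2)) * (ν^L * a) := h1
        _ = b * (a^2 * (K*ν)^(L-2) * ν^L) := by ring
        _ ≤ b * C₄ := mul_le_mul_of_nonneg_left hQ hbpos.le
      -- m facts
      have hminv : a⁻¹ ≤ m := by
        rw [hm]
        exact Finset.single_le_sum (f := fun j : Fin L => (α ν j)⁻¹)
          (fun j _ => (inv_pos.mpr (hpos j)).le) (Finset.mem_univ i₀)
      have hmpos : 0 < m := lt_of_lt_of_le (inv_pos.mpr hapos) hminv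
      have hmsplit : m = a⁻¹ + ∑ j ∈ Finset.univ.erase i₀, (α ν j)⁻¹ := by
        rw [hm, ← Finset.add_sum_erase _ _ (Finset.mem_univ i₀)]
      have hrest_sum : ∑ j ∈ Finset.univ.erase i₀, (α ν j)⁻¹ ≤ ((L:ℝ)-1) * b⁻¹ := by
        have h1 : ∀ j ∈ Finset.univ.erase i₀, (α ν j)⁻¹ ≤ b⁻¹ := by
          intro j hj
          exact inv_anti₀ hbpos (hsec j (Finset.mem_erase.mp hj).1)
        calc ∑ j ∈ Finset.univ.erase i₀, (α ν j)⁻¹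
            ≤ (Finset.univ.erase i₀).card • b⁻¹ := Finset.sum_le_card_nsmul _ _ _ h1
        _ = ((L:ℝ)-1) * b⁻¹ := by
            rw [Finset.card_erase_of_mem (Finset.mem_univ i₀), Finset.card_univ,
              Fintype.card_fin, nsmul_eq_mul, Nat.cast_sub hL, Nat.cast_one]
      refine ⟨?_, ?_, ?_⟩
      · -- 1 ≤ a * m
        calc (1:ℝ) = a * a⁻¹ := (mul_inv_cancel₀ hapos.ne').symm
        _ ≤ a * m := mul_le_mul_of_nonneg_left hminv hapos.le
      · -- a * m ≤ 1 + (L-1) * C₄ / c₀ / ν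
        have h1 : a * m ≤ 1 + ((L:ℝ)-1) * (a / b) := by
          calc a * m = a * a⁻¹ + a * ∑ j ∈ Finset.univ.erase i₀, (α ν j)⁻¹ := by
                rw [hmsplit]; ring
          _ ≤ 1 + a * (((L:ℝ)-1) * b⁻¹) := by
                rw [mul_inv_cancel₀ hapos.ne']
                exact add_le_add (le_refl 1) (mul_le_mul_of_nonneg_left hrest_sum hapos.le)
          _ = 1 + ((L:ℝ)-1) * (a / b) := by rw [div_eq_mul_inv]; ring
        have h2 : a / b ≤ C₄ / (c₀ * ν^L) := by
          rw [div_le_div_iff₀ hbpos (by positivity)]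
          calc a * (c₀ * ν^L) = c₀ * ν^L * a := by ring
          _ ≤ b * C₄ := hBA
          _ = C₄ * b := by ring
        have h3 : C₄ / (c₀ * ν^L) ≤ C₄ / (c₀ * ν) := by
          apply div_le_div_of_nonneg_left hC₄pos.le (by positivity)
          exact mul_le_mul_of_nonneg_left hνL hc₀pos.le
        have hL1' : (0:ℝ) ≤ (L:ℝ) - 1 := by
          have : (1:ℝ) ≤ L := by exact_mod_cast hL
          linarith
        calc a * m ≤ 1 + ((L:ℝ)-1) * (a/b) := h1
        _ ≤ 1 + ((L:ℝ)-1) * (C₄ / (c₀ * ν)) := by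
              apply add_le_add (le_refl _)
              exact mul_le_mul_of_nonneg_left (le_trans h2 h3) hL1'
        _ = 1 + ((L:ℝ)-1) * C₄ / c₀ / ν := by ring
      · -- c₀/C₄ * ν ≤ b * m
        have h1 : c₀ / C₄ * ν ≤ b * a⁻¹ := by
          rw [div_mul_eq_mul_div, div_le_iff₀ hC₄pos]
          have h3 : c₀ * ν * a ≤ b * C₄ := by
            calc c₀ * ν * a ≤ c₀ * ν^L * a := by
                  apply mul_le_mul_of_nonneg_right _ hapos.le
                  exact mul_le_mul_of_nonneg_left hνL hc₀pos.le
            _ ≤ b * C₄ := hBA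
          calc c₀ * ν = (c₀ * ν * a) * a⁻¹ := by
                field_simp
          _ ≤ (b * C₄) * a⁻¹ :=
                mul_le_mul_of_nonneg_right h3 (inv_pos.mpr hapos).le
          _ = b * a⁻¹ * C₄ := by ring
        calc c₀ / C₄ * ν ≤ b * a⁻¹ := h1
        _ ≤ b * m := mul_le_mul_of_nonneg_left hminv hbpos.le
    -- conclude
    constructor
    · have hup : Tendsto (fun ν : ℝ => 1 + ((L:ℝ)-1) * C₄ / c₀ / ν) atTop (nhds 1) := by
        have h0 : Tendsto (fun ν : ℝ => ((L:ℝ)-1) * C₄ / c₀ / ν) atTop (nhds 0) :=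
          tendsto_const_nhds.div_atTop tendsto_id
        simpa using tendsto_const_nhds.add h0
      apply tendsto_of_tendsto_of_tendsto_of_le_of_le' tendsto_const_nhds hup
      · filter_upwards [eventually_ge_atTop (1:ℝ), hc₀ev] with ν h1 h2
        exact (main ν h1 h2).1
      · filter_upwards [eventually_ge_atTop (1:ℝ), hc₀ev] with ν h1 h2
        exact (main ν h1 h2).2.1
    · intro i hi
      have hlow : Tendsto (fun ν : ℝ => c₀ / C₄ * ν) atTop atTop :=
        Tendsto.const_mul_atTop (by positivity) tendsto_id
      apply tendsto_atTop_mono' atTop _ hlow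
      filter_upwards [eventually_ge_atTop (1:ℝ), hc₀ev] with ν h1 h2
      have hν0 : (0:ℝ) < ν := lt_of_lt_of_le one_pos h1
      obtain ⟨hsm, hpos, hspec⟩ := hα ν hν0
      have hmono : α ν i₁ ≤ α ν i := by
        apply hsm.monotone
        simp only [Fin.le_def, hi₁]
        omega
      have hmpos : (0:ℝ) < ∑ j, (α ν j)⁻¹ :=
        Finset.sum_pos (fun j _ => inv_pos.mpr (hpos j)) ⟨i₀, Finset.mem_univ _⟩
      calc c₀ / C₄ * ν ≤ α ν i₁ * ∑ j, (α ν j)⁻¹ := (main ν h1 h2).2.2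
      _ ≤ α ν i * ∑ j, (α ν j)⁻¹ := mul_le_mul_of_nonneg_right hmono hmpos.le
end

section
/- Define m(ν) := Σ_{i=1}^{L} 1/α_i(ν). Then for every s ≥ 0, the product Π_{i=1}^{L} (1 + s/(α_i(ν)·m(ν)))^{−1} converges to 1/(1+s) as ν → ∞. (This is the statement that the Laplace transform of the scaled escape time T_{L,0}(ν)/E T_{L,0}(ν) converges pointwise to the Laplace transform of a unit-mean exponential random variable.) -/
open Filter Matrix Polynomial Finset

/-- Generalized tridiagonal family: states `i + c`, `i : Fin n`. -/
noncomputable def triMat (n : ℕ) (c ν : ℝ) : Matrix (Fin n) (Fin n) ℝ :=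
  Matrix.of fun i j =>
    if j = i then ((n : ℝ) - 1 - (i : ℕ)) * ν + ((i : ℕ) + c)
    else if (j : ℕ) = (i : ℕ) + 1 then -(((n : ℝ) - 1 - (i : ℕ)) * ν)
    else if (j : ℕ) + 1 = (i : ℕ) then -(((i : ℕ) : ℝ) + c)
    else 0

lemma sum_if_coe (n k : ℕ) (y : ℝ) :
    (∑ j : Fin n, if (j : ℕ) = k then y else 0) = if k < n then y else 0 := by
  by_cases h : k < n
  · rw [if_pos h, Finset.sum_eq_single (⟨k, h⟩ : Fin n)]
    · simp
    · intro b _ hb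
      rw [if_neg]
      simpa [Fin.ext_iff] using hb
    · simp
  · rw [if_neg h]
    apply Finset.sum_eq_zero
    intro j _
    rw [if_neg]
    omega

lemma triMat_row_sum (n : ℕ) (c ν : ℝ) (i : Fin n) :
    (∑ j, triMat n c ν i j) = if (i : ℕ) = 0 then c else 0 := by
  have hsplit : ∀ j : Fin n, triMat n c ν i j =
      (if (j : ℕ) = (i : ℕ) then ((n : ℝ) - 1 - (i : ℕ)) * ν + ((i : ℕ) + c) else 0)
      + (if (j : ℕ) = (i : ℕ) + 1 then -(((n : ℝ) - 1 - (i : ℕ)) * ν) else 0)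
      + (if (j : ℕ) + 1 = (i : ℕ) then -(((i : ℕ) : ℝ) + c) else 0) := by
    intro j
    simp only [triMat, Matrix.of_apply]
    by_cases h1 : j = i
    · have : (j : ℕ) = (i : ℕ) := by rw [h1]
      rw [if_pos h1, if_pos this, if_neg (by omega), if_neg (by omega)]
      ring
    · have h1' : ¬ (j : ℕ) = (i : ℕ) := by simpa [Fin.ext_iff] using h1
      rw [if_neg h1, if_neg h1']
      by_cases h2 : (j : ℕ) = (i : ℕ) + 1
      · rw [if_pos h2, if_pos h2, if_neg (by omega)]; ring
      · rw [if_neg h2, if_neg h2]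
        by_cases h3 : (j : ℕ) + 1 = (i : ℕ)
        · rw [if_pos h3]; ring
        · rw [if_neg h3]; ring
  rw [Finset.sum_congr rfl fun j _ => hsplit j]
  rw [Finset.sum_add_distrib, Finset.sum_add_distrib, sum_if_coe, sum_if_coe]
  have hterm3 : (∑ j : Fin n, if (j : ℕ) + 1 = (i : ℕ) then -(((i : ℕ) : ℝ) + c) else 0)
      = if (i : ℕ) = 0 then 0 else -(((i : ℕ) : ℝ) + c) := by
    by_cases hi : (i : ℕ) = 0
    · rw [if_pos hi]
      apply Finset.sum_eq_zero
      intro j _; rw [if_neg (by omega)]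
    · rw [if_neg hi]
      have : ∀ j : Fin n, ((j : ℕ) + 1 = (i : ℕ)) ↔ ((j : ℕ) = (i : ℕ) - 1) := by
        intro j; omega
      simp_rw [this]
      rw [sum_if_coe, if_pos (by omega)]
  rw [hterm3]
  have hin : (i : ℕ) < n := i.isLt
  rw [if_pos hin]
  by_cases h2 : (i : ℕ) + 1 < n
  · rw [if_pos h2]
    by_cases hi : (i : ℕ) = 0
    · rw [if_pos hi, if_pos hi, hi]; push_cast; ring
    · rw [if_neg hi, if_neg hi]; ring
  · rw [if_neg h2]
    have hcast : ((n : ℝ) - 1 - (i : ℕ)) = 0 := by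
      have h3 : ((i : ℕ) : ℝ) + 1 = (n : ℝ) := by
        have : (i : ℕ) + 1 = n := by omega
        exact_mod_cast congrArg (Nat.cast : ℕ → ℝ) this
      linarith
    rw [hcast]
    by_cases hi : (i : ℕ) = 0
    · rw [if_pos hi, if_pos hi, hi]; push_cast; ring
    · rw [if_neg hi, if_neg hi]; ring



lemma triMat_submatrix (m : ℕ) (c ν : ℝ) :
    (triMat (m+1) c ν).submatrix Fin.succ Fin.succ = triMat m (c+1) ν := by
  ext i j
  simp only [submatrix_apply, triMat, Matrix.of_apply, Fin.val_succ]
  have hje : (j.succ = i.succ) ↔ (j = i) := by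
    constructor
    · exact fun h => Fin.succ_injective _ h
    · intro h; rw [h]
  by_cases h1 : j = i
  · rw [if_pos (hje.mpr h1), if_pos h1]
    push_cast; ring_nf
  · rw [if_neg (fun h => h1 (hje.mp h)), if_neg h1]
    by_cases h2 : (j : ℕ) = (i : ℕ) + 1
    · rw [if_pos (by omega), if_pos h2]
      push_cast; ring_nf
    · rw [if_neg (by omega), if_neg h2]
      by_cases h3 : (j : ℕ) + 1 = (i : ℕ)
      · rw [if_pos (by omega), if_pos h3]
        push_cast; ring_nf
      · rw [if_neg (by omega), if_neg h3]

lemma triMat_det (n : ℕ) : ∀ c ν : ℝ, (triMat n c ν).det = ∏ k ∈ Finset.range n, (c + k) := by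
  induction n with
  | zero => intro c ν; simp [Matrix.det_isEmpty]
  | succ m ih =>
    intro c ν
    set M : Matrix (Fin (m+1)) (Fin (m+1)) ℝ := triMat (m+1) c ν with hM
    have hcolsum : (M.updateCol 0 (fun k => ∑ i, M k i)).det = M.det := by
      have := Matrix.det_updateCol_sum M 0 (fun _ => (1:ℝ))
      simpa using this
    rw [← hcolsum, Matrix.det_succ_column_zero]
    have hcol : ∀ i : Fin (m+1),
        (M.updateCol 0 (fun k => ∑ i, M k i)) i 0 = if i = 0 then c else 0 := by
      intro i
      rw [Matrix.updateCol_self]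
      rw [triMat_row_sum]
      congr 1
      exact propext Fin.val_eq_zero_iff
    rw [Finset.sum_eq_single (0 : Fin (m+1))]
    · rw [hcol 0, if_pos rfl]
      have hsub : (M.updateCol 0 (fun k => ∑ i, M k i)).submatrix
          (Fin.succAbove 0) Fin.succ = triMat m (c+1) ν := by
        rw [← triMat_submatrix m c ν]
        ext i j
        simp only [submatrix_apply]
        rw [Fin.succAbove_zero, Matrix.updateCol_ne (Fin.succ_ne_zero j)]
      rw [hsub, ih (c+1) ν, Finset.prod_range_succ']
      simp only [Fin.val_zero, pow_zero, one_smul, smul_eq_mul, Nat.cast_zero, add_zero]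
      rw [mul_comm]
      congr 1
      · refine Finset.prod_congr rfl fun k _ => ?_
        push_cast; ring
      · norm_num
    · intro b _ hb
      rw [hcol b, if_neg hb]
      simp
    · simp


lemma eval_charpoly'_s6 {n : ℕ} (M : Matrix (Fin n) (Fin n) ℝ) (t : ℝ) :
    M.charpoly.eval t = (Matrix.scalar (Fin n) t - M).det := by
  rw [Matrix.charpoly, _root_.eval_det, Matrix.matPolyEquiv_charmatrix, eval_sub, eval_X, eval_C]

lemma mem_spectrum_iff_root {n : ℕ} (M : Matrix (Fin n) (Fin n) ℝ) (μ : ℝ) :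
    μ ∈ spectrum ℝ M ↔ M.charpoly.eval μ = 0 := by
  rw [spectrum.mem_iff, eval_charpoly'_s6]
  have halg : (algebraMap ℝ (Matrix (Fin n) (Fin n) ℝ)) μ = Matrix.scalar (Fin n) μ := by
    rw [Matrix.algebraMap_eq_diagonal, Matrix.scalar_apply]
    rfl
  rw [halg, Matrix.isUnit_iff_isUnit_det, isUnit_iff_ne_zero, not_not]

lemma charpoly_factor {n : ℕ} (M : Matrix (Fin n) (Fin n) ℝ) (β : Fin n → ℝ)
    (hinj : Function.Injective β) (hroot : ∀ i, M.charpoly.eval (β i) = 0) :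
    M.charpoly = ∏ i, (X - C (β i)) := by
  have hpm : M.charpoly.Monic := M.charpoly_monic
  have hpd : M.charpoly.natDegree = n := by
    rw [Matrix.charpoly_natDegree_eq_dim, Fintype.card_fin]
  have hqm : (∏ i : Fin n, (X - C (β i))).Monic :=
    monic_prod_of_monic _ _ fun i _ => monic_X_sub_C _
  have hqd : (∏ i : Fin n, (X - C (β i))).natDegree = n := by
    rw [natDegree_prod_of_monic _ _ fun i _ => monic_X_sub_C _]
    simp [natDegree_X_sub_C]
  have hsub : (Finset.univ.image β).val ≤ M.charpoly.roots := by
    rw [Multiset.le_iff_subset (Finset.univ.image β).nodup]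
    intro x hx
    simp only [Finset.mem_val, Finset.mem_image] at hx
    obtain ⟨i, _, rfl⟩ := hx
    rw [mem_roots hpm.ne_zero]
    exact hroot i
  have hdvd : (∏ i : Fin n, (X - C (β i))) ∣ M.charpoly := by
    have h1 : ((Finset.univ.image β).val.map fun a => X - C a).prod ∣ M.charpoly :=
      dvd_trans (Multiset.prod_dvd_prod_of_le (Multiset.map_le_map hsub))
        M.charpoly.prod_multiset_X_sub_C_dvd
    have h2 : (∏ i : Fin n, (X - C (β i)))
        = ((Finset.univ.image β).val.map fun a => X - C a).prod := by
      rw [Finset.prod_map_val]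
      exact (Finset.prod_image (f := fun a => X - C a) (g := β) fun x _ y _ h => hinj h).symm
    rwa [h2]

  exact (eq_of_monic_of_dvd_of_natDegree_le hqm hpm hdvd (le_of_eq (hpd.trans hqd.symm)))


lemma prod_sign_parity {ι : Type*} [DecidableEq ι] (s : Finset ι) (f : ι → ℝ)
    (hf : ∀ i ∈ s, f i ≠ 0) :
    0 < (-1:ℝ)^((s.filter (fun i => f i < 0)).card) * ∏ i ∈ s, f i := by
  induction s using Finset.induction_on with
  | empty => simp
  | @insert a s ha ih =>
    have hne : ∀ i ∈ s, f i ≠ 0 := fun i hi => hf i (Finset.mem_insert_of_mem hi)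
    have ihp := ih hne
    rw [Finset.prod_insert ha, Finset.filter_insert]
    by_cases hfa : f a < 0
    · rw [if_pos hfa, Finset.card_insert_of_notMem (fun h => ha (Finset.mem_of_mem_filter a h)),
        pow_succ]
      have h2 : (-1:ℝ)^((s.filter (fun i => f i < 0)).card) * -1 * (f a * ∏ i ∈ s, f i)
          = ((-1:ℝ)^((s.filter (fun i => f i < 0)).card) * ∏ i ∈ s, f i) * (-(f a)) := by ring
      rw [h2]
      exact mul_pos ihp (neg_pos.mpr hfa)
    · rw [if_neg hfa]
      have hfa' : 0 < f a :=
        lt_of_le_of_ne (not_lt.mp hfa) (Ne.symm (hf a (Finset.mem_insert_self a s)))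
      have h2 : (-1:ℝ)^((s.filter (fun i => f i < 0)).card) * (f a * ∏ i ∈ s, f i)
          = f a * ((-1:ℝ)^((s.filter (fun i => f i < 0)).card) * ∏ i ∈ s, f i) := by ring
      rw [h2]
      exact mul_pos hfa' ihp

lemma sign_eq_parity_aux {a b : ℕ} {P : ℝ} (h1 : 0 < (-1:ℝ)^a * P) (h2 : 0 < (-1:ℝ)^b * P) :
    (a + b) % 2 = 0 := by
  rcases Nat.even_or_odd a with hA | hA <;> rcases Nat.even_or_odd b with hB | hB
  · exact Nat.even_iff.mp (hA.add hB)
  · exfalso; rw [hA.neg_one_pow] at h1; rw [hB.neg_one_pow] at h2; nlinarith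
  · exfalso; rw [hA.neg_one_pow] at h1; rw [hB.neg_one_pow] at h2; nlinarith
  · exact Nat.even_iff.mp (hA.add_odd hB)

lemma gap_of_signs {L : ℕ} (hL : 1 ≤ L) (β : Fin L → ℝ) (hmono : StrictMono β)
    (ν : ℝ) (hν : 0 < ν)
    (hsign : ∀ k, k < L → 0 < (-1:ℝ)^(L+k+1) * ∏ i, (((k:ℝ)+1/2)*ν - β i)) :
    ∀ i : Fin L, (i : ℕ) ≠ 0 → ν/2 < β i := by
  classical
  haveI : NeZero L := ⟨by omega⟩
  set N : ℕ → ℕ := fun k => (Finset.univ.filter (fun i : Fin L => ((k:ℝ)+1/2)*ν < β i)).card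
    with hN
  -- parity facts
  have hparity : ∀ k, k < L → (N k + (L + k + 1)) % 2 = 0 := by
    intro k hk
    have h0 : ∀ i : Fin L, ((k:ℝ)+1/2)*ν - β i ≠ 0 := by
      intro i
      intro hc
      have := hsign k hk
      rw [Finset.prod_eq_zero (Finset.mem_univ i) hc, mul_zero] at this
      exact lt_irrefl 0 this
    have hp := prod_sign_parity Finset.univ (fun i : Fin L => ((k:ℝ)+1/2)*ν - β i)
      (fun i _ => h0 i)
    have hfilter : (Finset.univ.filter (fun i : Fin L => ((k:ℝ)+1/2)*ν - β i < 0))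
        = (Finset.univ.filter (fun i : Fin L => ((k:ℝ)+1/2)*ν < β i)) := by
      apply Finset.filter_congr
      intro i _
      simp [sub_neg]
    rw [hfilter] at hp
    exact sign_eq_parity_aux hp (hsign k hk)
  -- antitone
  have hanti : ∀ k k', k ≤ k' → N k' ≤ N k := by
    intro k k' hkk
    apply Finset.card_le_card
    apply Finset.monotone_filter_right
    intro i _ hi
    have : ((k:ℝ)+1/2)*ν ≤ ((k':ℝ)+1/2)*ν := by
      apply mul_le_mul_of_nonneg_right _ hν.le
      have : (k:ℝ) ≤ (k':ℝ) := by exact_mod_cast hkk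
      linarith
    linarith [hi]
  -- strict decrease
  have hstrict : ∀ k, k + 1 < L → N (k+1) < N k := by
    intro k hk1
    have h1 := hparity k (by omega)
    have h2 := hparity (k+1) hk1
    have hle := hanti k (k+1) (by omega)
    omega
  -- N 0 ≥ L - 1
  have hkey : ∀ j, j < L → j ≤ N (L-1-j) := by
    intro j
    induction j with
    | zero => intro _; omega
    | succ j ihj =>
      intro hj
      have hj' : j < L := by omega
      have ih := ihj hj'
      have hs := hstrict (L-1-(j+1)) (by omega)
      have : L-1-(j+1)+1 = L-1-j := by omega
      rw [this] at hs
      omega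
  have hN0 : L - 1 ≤ N 0 := by
    have := hkey (L-1) (by omega)
    have h2 : L-1-(L-1) = 0 := by omega
    rw [h2] at this
    exact this
  have hN0le : N 0 ≤ L := by
    rw [hN]
    refine le_trans (Finset.card_filter_le _ _) ?_
    simp
  have hN0eq : N 0 = L - 1 := by
    have hp := hparity 0 (by omega)
    omega
  -- extract
  intro i hi
  set S := Finset.univ.filter (fun i : Fin L => ¬ ((0:ℝ)+1/2)*ν < β i) with hS
  have hcardS : S.card = 1 := by
    have htot := Finset.card_filter_add_card_filter_not
      (s := (Finset.univ : Finset (Fin L))) (p := fun i : Fin L => ((0:ℝ)+1/2)*ν < β i)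
    have h2 : N 0 + S.card = L := by
      rw [hN, hS]
      simpa using htot
    omega
  have h0S : (0 : Fin L) ∈ S := by
    obtain ⟨x, hx⟩ := Finset.card_eq_one.mp hcardS
    have hxS : x ∈ S := by rw [hx]; exact Finset.mem_singleton_self x
    have hxle : ¬ ((0:ℝ)+1/2)*ν < β x := (Finset.mem_filter.mp hxS).2
    rw [hS, Finset.mem_filter]
    refine ⟨Finset.mem_univ _, ?_⟩
    intro hc
    apply hxle
    calc ((0:ℝ)+1/2)*ν < β 0 := hc
    _ ≤ β x := (hmono.le_iff_le).mpr (Fin.zero_le x)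
  have hiS : i ∉ S := by
    intro hiS
    obtain ⟨x, hx⟩ := Finset.card_eq_one.mp hcardS
    rw [hx] at h0S hiS
    rw [Finset.mem_singleton] at h0S hiS
    apply hi
    rw [hiS.trans h0S.symm]
    simp
  have : ((0:ℝ)+1/2)*ν < β i := by
    by_contra hc
    exact hiS (Finset.mem_filter.mpr ⟨Finset.mem_univ _, hc⟩)
  linarith



noncomputable def limT (L k : ℕ) : Matrix (Fin L) (Fin L) ℝ :=
  Matrix.of fun i j =>
    if j = i then ((k:ℝ) + 1/2) - ((L:ℝ) - 1 - (i:ℕ))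
    else if (j:ℕ) = (i:ℕ) + 1 then ((L:ℝ) - 1 - (i:ℕ))
    else 0

lemma limT_det (L k : ℕ) :
    (limT L k).det = ∏ i : Fin L, (((k:ℝ) + 1/2) - ((L:ℝ) - 1 - (i:ℕ))) := by
  have h : (limT L k).BlockTriangular id := by
    intro i j hij
    have h1 : ¬ (j = i) := by
      intro hc; rw [hc] at hij; exact lt_irrefl _ hij
    have h2 : ¬ ((j:ℕ) = (i:ℕ) + 1) := by
      have : (j:ℕ) < (i:ℕ) := hij
      omega
    simp only [limT, Matrix.of_apply, if_neg h1, if_neg h2]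
  rw [Matrix.det_of_upperTriangular h]
  apply Finset.prod_congr rfl
  intro i _
  simp [limT]


lemma card_fin_lt (L m : ℕ) (h : m ≤ L) :
    ((Finset.univ : Finset (Fin L)).filter (fun i : Fin L => (i:ℕ) < m)).card = m := by
  apply Finset.card_eq_of_bijective (fun i hi => (⟨i, lt_of_lt_of_le hi h⟩ : Fin L))
  · intro a ha
    have := (Finset.mem_filter.mp ha).2
    exact ⟨(a:ℕ), this, by simp⟩
  · intro i hi
    simp only [Finset.mem_filter]
    exact ⟨Finset.mem_univ _, hi⟩
  · intro i j hi hj hij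
    simpa [Fin.ext_iff] using hij

lemma neg_one_pow_mod {a b : ℕ} (h : a % 2 = b % 2) : (-1:ℝ)^a = (-1:ℝ)^b := by
  rcases Nat.even_or_odd a with hA | hA
  · have hB : Even b := by
      rw [Nat.even_iff] at *; omega
    rw [hA.neg_one_pow, hB.neg_one_pow]
  · have hB : Odd b := by
      rw [Nat.odd_iff] at *; omega
    rw [hA.neg_one_pow, hB.neg_one_pow]

lemma limT_sign (L k : ℕ) (hk : k < L) : 0 < (-1:ℝ)^(L+k+1) * (limT L k).det := by
  rw [limT_det]
  have hne : ∀ i : Fin L, (((k:ℝ) + 1/2) - ((L:ℝ) - 1 - (i:ℕ))) ≠ 0 := by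
    intro i hc
    have h2 : ((2*k + 2*(i:ℕ) + 3 : ℕ) : ℝ) = ((2*L : ℕ) : ℝ) := by
      push_cast
      linarith
    have := Nat.cast_injective (R := ℝ) h2
    omega
  have hp := prod_sign_parity Finset.univ (fun i : Fin L => ((k:ℝ) + 1/2) - ((L:ℝ) - 1 - (i:ℕ)))
    (fun i _ => hne i)
  have hcard : (Finset.univ.filter
      (fun i : Fin L => ((k:ℝ) + 1/2) - ((L:ℝ) - 1 - (i:ℕ)) < 0)).card = L - 1 - k := by
    have heq : (Finset.univ.filter
        (fun i : Fin L => ((k:ℝ) + 1/2) - ((L:ℝ) - 1 - (i:ℕ)) < 0))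
        = (Finset.univ.filter (fun i : Fin L => (i:ℕ) < L - 1 - k)) := by
      apply Finset.filter_congr
      intro i _
      constructor
      · intro hlt
        by_contra hc
        push_neg at hc
        have : ((L - 1 - k : ℕ) : ℝ) ≤ ((i:ℕ) : ℝ) := by exact_mod_cast hc
        have hL1 : ((L : ℝ) - 1 - (k:ℕ)) ≤ ((i:ℕ) : ℝ) := by
          have : ((L - 1 - k : ℕ) : ℝ) ≥ (L:ℝ) - 1 - (k:ℕ) := by
            rcases le_or_gt (1 + k) L with h4 | h4
            · have he : L - 1 - k = L - (1 + k) := by omega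
              rw [he, Nat.cast_sub h4]
              push_cast
              linarith
            · have he : L - 1 - k = 0 := by omega
              rw [he]
              have hlt : (L:ℝ) < 1 + (k:ℝ) := by exact_mod_cast h4
              simp only [Nat.cast_zero]
              linarith
          linarith
        linarith
      · intro hlt
        have h5 : (i:ℕ) + 1 + k ≤ L - 1 := by omega
        have h6 : ((i:ℕ) : ℝ) + 1 + (k:ℝ) ≤ (L:ℝ) - 1 := by
          have : (((i:ℕ) + 1 + k : ℕ) : ℝ) ≤ ((L - 1 : ℕ) : ℝ) := by exact_mod_cast h5
          push_cast at this
          rw [Nat.cast_sub (by omega)] at this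
          push_cast at this
          linarith
        linarith
    rw [heq, card_fin_lt _ _ (by omega)]
  rw [hcard] at hp
  have hmod : (L - 1 - k) % 2 = (L + k + 1) % 2 := by omega
  rw [neg_one_pow_mod hmod] at hp
  exact hp





noncomputable def Dmat (L k : ℕ) (ν : ℝ) : Matrix (Fin L) (Fin L) ℝ :=
  Matrix.of fun i j =>
    (if j = i then ((k:ℝ) + 1/2) else 0) - birthDeathMat L ν i j / ν

lemma Dmat_entry (L k : ℕ) (i j : Fin L) :
    ∃ e : ℝ, ∀ ν : ℝ, ν ≠ 0 → Dmat L k ν i j = limT L k i j + e / ν := by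
  by_cases h1 : j = i
  · refine ⟨-((i:ℕ) + 1), fun ν hν => ?_⟩
    simp only [Dmat, limT, birthDeathMat, Matrix.of_apply, if_pos h1]
    field_simp
    ring
  · by_cases h2 : (j:ℕ) = (i:ℕ) + 1
    · refine ⟨0, fun ν hν => ?_⟩
      simp only [Dmat, limT, birthDeathMat, Matrix.of_apply, if_neg h1, if_pos h2]
      field_simp
      ring
    · by_cases h3 : (j:ℕ) + 1 = (i:ℕ)
      · refine ⟨(i:ℕ) + 1, fun ν hν => ?_⟩
        simp only [Dmat, limT, birthDeathMat, Matrix.of_apply, if_neg h1, if_neg h2, if_pos h3]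
        field_simp
        ring
      · refine ⟨0, fun ν hν => ?_⟩
        simp only [Dmat, limT, birthDeathMat, Matrix.of_apply, if_neg h1, if_neg h2, if_neg h3]
        simp

lemma Dmat_tendsto (L k : ℕ) :
    Tendsto (fun ν => Dmat L k ν) atTop (nhds (limT L k)) := by
  apply tendsto_pi_nhds.mpr
  intro i
  rw [tendsto_pi_nhds]
  intro j
  obtain ⟨e, he⟩ := Dmat_entry L k i j
  have h1 : Tendsto (fun ν : ℝ => limT L k i j + e / ν) atTop (nhds (limT L k i j + 0)) :=
    tendsto_const_nhds.add (tendsto_const_nhds.div_atTop tendsto_id)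
  rw [add_zero] at h1
  apply h1.congr'
  filter_upwards [eventually_gt_atTop (0:ℝ)] with ν hν
  exact (he ν hν.ne').symm

lemma eventually_sign (L k : ℕ) (hk : k < L) :
    ∀ᶠ ν : ℝ in atTop, 0 < (-1:ℝ)^(L+k+1) *
      (Matrix.scalar (Fin L) (((k:ℝ) + 1/2) * ν) - birthDeathMat L ν).det := by
  have hdet : Tendsto (fun ν => (Dmat L k ν).det) atTop (nhds (limT L k).det) :=
    ((continuous_id.matrix_det).tendsto (limT L k)).comp (Dmat_tendsto L k)
  have hdet' : Tendsto (fun ν => (-1:ℝ)^(L+k+1) * (Dmat L k ν).det) atTop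
      (nhds ((-1:ℝ)^(L+k+1) * (limT L k).det)) := tendsto_const_nhds.mul hdet
  have hev := hdet'.eventually (eventually_gt_nhds (limT_sign L k hk))
  filter_upwards [hev, eventually_gt_atTop (0:ℝ)] with ν hpos hν
  have hscale : Matrix.scalar (Fin L) (((k:ℝ) + 1/2) * ν) - birthDeathMat L ν
      = ν • Dmat L k ν := by
    ext i j
    simp only [Matrix.sub_apply, Matrix.smul_apply, Dmat, Matrix.of_apply,
      Matrix.scalar_apply, Matrix.diagonal_apply, smul_eq_mul]
    by_cases h : j = i
    · rw [if_pos h, if_pos (h.symm)]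
      field_simp
    · rw [if_neg h, if_neg (fun hc => h (hc.symm))]
      field_simp
      ring
  rw [hscale, Matrix.det_smul]
  simp only [Fintype.card_fin, smul_eq_mul]
  have h2 : (-1:ℝ)^(L+k+1) * (ν ^ L * (Dmat L k ν).det)
      = ν ^ L * ((-1:ℝ)^(L+k+1) * (Dmat L k ν).det) := by ring
  rw [h2]
  exact mul_pos (pow_pos hν L) hpos

/-- Let `0 < α_1(ν) < ⋯ < α_L(ν)` denote the (real, distinct, strictly
positive) eigenvalues of `A(ν)`, for `ν > 0`, and let
`m(ν) := Σ_{i=1}^L 1/α_i(ν)`.  Then for every `s ≥ 0`,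
`Π_{i=1}^L (1 + s/(α_i(ν)·m(ν)))⁻¹ → 1/(1+s)` as `ν → ∞`
(pointwise convergence of the Laplace transform of the scaled escape time to
that of a unit-mean exponential random variable). -/
theorem birthDeathMat_laplace_transform_limit (L : ℕ) (hL : 1 ≤ L)
    (α : ℝ → Fin L → ℝ)
    (hα : ∀ ν : ℝ, 0 < ν → StrictMono (α ν) ∧ (∀ i, 0 < α ν i) ∧
      spectrum ℝ (birthDeathMat L ν) = Set.range (α ν)) :
    ∀ s : ℝ, 0 ≤ s →
      Tendsto
        (fun ν : ℝ =>
          ∏ i : Fin L, (1 + s / (α ν i * ∑ j : Fin L, (α ν j)⁻¹))⁻¹)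
        atTop (nhds (1 / (1 + s))) := by
  intro s hs
  classical
  haveI : NeZero L := ⟨by omega⟩
  set D : ℝ := ∏ k ∈ Finset.range L, ((1:ℝ) + (k:ℕ)) with hD
  have hDpos : 0 < D := Finset.prod_pos (fun k _ => by positivity)
  have hbd_tri : ∀ ν : ℝ, birthDeathMat L ν = triMat L 1 ν := by
    intro ν; ext i j
    simp only [birthDeathMat, triMat, Matrix.of_apply]
    by_cases h1 : j = i
    · rw [if_pos h1, if_pos h1]; push_cast; ring
    · rw [if_neg h1, if_neg h1]
      by_cases h2 : (j:ℕ) = (i:ℕ)+1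
      · rw [if_pos h2, if_pos h2]; push_cast; ring
      · rw [if_neg h2, if_neg h2]
  have hdet : ∀ ν : ℝ, (birthDeathMat L ν).det = D := by
    intro ν; rw [hbd_tri ν, triMat_det]
  have hprod_det : ∀ ν : ℝ, 0 < ν → ∀ t : ℝ,
      (Matrix.scalar (Fin L) t - birthDeathMat L ν).det = ∏ i, (t - α ν i) := by
    intro ν hν t
    obtain ⟨hmono, hpos, hspec⟩ := hα ν hν
    have hroot : ∀ i, (birthDeathMat L ν).charpoly.eval (α ν i) = 0 := by
      intro i
      rw [← mem_spectrum_iff_root, hspec]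
      exact Set.mem_range_self i
    have hfac := charpoly_factor (birthDeathMat L ν) (α ν) hmono.injective hroot
    rw [← eval_charpoly'_s6, hfac, Polynomial.eval_prod]
    apply Finset.prod_congr rfl
    intro i _
    simp
  have hprod_eig : ∀ ν : ℝ, 0 < ν → (∏ i, α ν i) = D := by
    intro ν hν
    have h0 := hprod_det ν hν 0
    rw [map_zero, zero_sub, Matrix.det_neg, Fintype.card_fin, hdet ν] at h0
    have h1 : ∏ i : Fin L, ((0:ℝ) - α ν i) = (-1:ℝ)^L * ∏ i, α ν i := by
      calc ∏ i : Fin L, ((0:ℝ) - α ν i) = ∏ i : Fin L, ((-1) * α ν i) :=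
            Finset.prod_congr rfl (fun i _ => by ring)
      _ = (∏ _i : Fin L, (-1:ℝ)) * ∏ i, α ν i := Finset.prod_mul_distrib
      _ = (-1:ℝ)^L * ∏ i, α ν i := by
            rw [Finset.prod_const, Finset.card_univ, Fintype.card_fin]
    rw [h1] at h0
    exact (mul_left_cancel₀ (pow_ne_zero L (by norm_num : (-1:ℝ) ≠ 0)) h0).symm
  have hgap : ∀ᶠ ν : ℝ in atTop, ∀ i : Fin L, (i:ℕ) ≠ 0 → ν/2 < α ν i := by
    have hall : ∀ᶠ ν : ℝ in atTop, ∀ k ∈ Finset.range L,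
        0 < (-1:ℝ)^(L+k+1) *
          (Matrix.scalar (Fin L) (((k:ℝ)+1/2)*ν) - birthDeathMat L ν).det :=
      (eventually_all_finset (Finset.range L)).mpr
        (fun k hk => eventually_sign L k (Finset.mem_range.mp hk))
    filter_upwards [hall, eventually_gt_atTop (0:ℝ)] with ν hsigns hν
    obtain ⟨hmono, hpos, hspec⟩ := hα ν hν
    apply gap_of_signs hL (α ν) hmono ν hν
    intro k hk
    have h := hsigns k (Finset.mem_range.mpr hk)
    rwa [hprod_det ν hν] at h
  have hA : ∀ᶠ ν : ℝ in atTop,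
      (1 ≤ α ν 0 * (∑ j, (α ν j)⁻¹)) ∧
      (α ν 0 * (∑ j, (α ν j)⁻¹) ≤ 1 + ((L:ℝ)-1)*2*D/ν) ∧
      (∀ i : Fin L, (i:ℕ) ≠ 0 → ((ν/2)^L/D ≤ α ν i * (∑ j, (α ν j)⁻¹))) := by
    filter_upwards [hgap, eventually_ge_atTop (2:ℝ)] with ν hg hν2
    have hν : 0 < ν := lt_of_lt_of_le (by norm_num) hν2
    obtain ⟨hmono, hpos, hspec⟩ := hα ν hν
    have hνh : 0 < ν/2 := by linarith
    have hcard : (Finset.univ.erase (0 : Fin L)).card = L - 1 := by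
      rw [Finset.card_erase_of_mem (Finset.mem_univ _), Finset.card_univ, Fintype.card_fin]
    have hrest_ge : (ν/2)^(L-1) ≤ ∏ j ∈ Finset.univ.erase (0 : Fin L), α ν j := by
      calc (ν/2)^(L-1) = ∏ _j ∈ Finset.univ.erase (0 : Fin L), (ν/2) := by
            rw [Finset.prod_const, hcard]
      _ ≤ ∏ j ∈ Finset.univ.erase (0 : Fin L), α ν j := by
            apply Finset.prod_le_prod (fun j _ => hνh.le)
            intro j hj
            have hj0 : (j:ℕ) ≠ 0 := by
              have := (Finset.mem_erase.mp hj).1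
              exact Fin.val_ne_zero_iff.mpr this
            exact (hg j hj0).le
    have hsplit : α ν 0 * ∏ j ∈ Finset.univ.erase (0 : Fin L), α ν j = D := by
      rw [Finset.mul_prod_erase _ _ (Finset.mem_univ (0 : Fin L)), hprod_eig ν hν]
    have hα0D : α ν 0 * (ν/2)^(L-1) ≤ D := by
      calc α ν 0 * (ν/2)^(L-1) ≤ α ν 0 * ∏ j ∈ Finset.univ.erase (0 : Fin L), α ν j :=
            mul_le_mul_of_nonneg_left hrest_ge (hpos 0).le
      _ = D := hsplit
    have hminv : (α ν 0)⁻¹ ≤ ∑ j, (α ν j)⁻¹ :=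
      Finset.single_le_sum (f := fun j => (α ν j)⁻¹)
        (fun j _ => inv_nonneg.mpr (hpos j).le) (Finset.mem_univ (0 : Fin L))
    refine ⟨?_, ?_, ?_⟩
    · calc (1:ℝ) = α ν 0 * (α ν 0)⁻¹ := (mul_inv_cancel₀ (hpos 0).ne').symm
      _ ≤ α ν 0 * ∑ j, (α ν j)⁻¹ := mul_le_mul_of_nonneg_left hminv (hpos 0).le
    · have hm_split : ∑ j, (α ν j)⁻¹
          = (α ν 0)⁻¹ + ∑ j ∈ Finset.univ.erase (0 : Fin L), (α ν j)⁻¹ :=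
        (Finset.add_sum_erase _ _ (Finset.mem_univ (0 : Fin L))).symm
      have hsum_le : ∑ j ∈ Finset.univ.erase (0 : Fin L), (α ν j)⁻¹ ≤ ((L:ℝ)-1) * (2/ν) := by
        calc ∑ j ∈ Finset.univ.erase (0 : Fin L), (α ν j)⁻¹
            ≤ ∑ _j ∈ Finset.univ.erase (0 : Fin L), (2/ν) := by
              apply Finset.sum_le_sum
              intro j hj
              have hj0 : (j:ℕ) ≠ 0 := by
                have := (Finset.mem_erase.mp hj).1
                exact Fin.val_ne_zero_iff.mpr this
              have h2 : ν/2 < α ν j := hg j hj0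
              have : (α ν j)⁻¹ ≤ (ν/2)⁻¹ := inv_anti₀ hνh h2.le
              calc (α ν j)⁻¹ ≤ (ν/2)⁻¹ := this
              _ = 2/ν := by rw [inv_div]
        _ = ((L-1:ℕ):ℝ) * (2/ν) := by rw [Finset.sum_const, hcard]; simp [mul_comm]
        _ = ((L:ℝ)-1) * (2/ν) := by rw [Nat.cast_sub hL]; norm_num
      have hone_le : (1:ℝ) ≤ (ν/2)^(L-1) := one_le_pow₀ (by linarith)
      have hα0_le_D : α ν 0 ≤ D := by nlinarith [hpos 0]
      have hsum_nonneg : 0 ≤ ∑ j ∈ Finset.univ.erase (0 : Fin L), (α ν j)⁻¹ :=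
        Finset.sum_nonneg (fun j _ => inv_nonneg.mpr (hpos j).le)
      calc α ν 0 * ∑ j, (α ν j)⁻¹
          = 1 + α ν 0 * ∑ j ∈ Finset.univ.erase (0 : Fin L), (α ν j)⁻¹ := by
            rw [hm_split, mul_add, mul_inv_cancel₀ (hpos 0).ne']
      _ ≤ 1 + D * (((L:ℝ)-1) * (2/ν)) := by
            have := mul_le_mul hα0_le_D hsum_le hsum_nonneg hDpos.le
            linarith
      _ = 1 + ((L:ℝ)-1)*2*D/ν := by ring
    · intro i hi
      have hge : ν/2 < α ν i := hg i hi
      have hαi_m : (ν/2) * (α ν 0)⁻¹ ≤ α ν i * ∑ j, (α ν j)⁻¹ :=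
        mul_le_mul hge.le hminv (inv_nonneg.mpr (hpos 0).le) (hpos i).le
      have hinv_ge : (ν/2)^(L-1)/D ≤ (α ν 0)⁻¹ := by
        have h3 : α ν 0 * ((ν/2)^(L-1)/D) ≤ 1 := by
          rw [mul_div_assoc'  ]
          exact (div_le_one hDpos).mpr hα0D
        rw [← mul_le_mul_iff_right₀ (hpos 0), mul_inv_cancel₀ (hpos 0).ne']
        exact h3
      have hLpow : (ν/2)^L = (ν/2) * (ν/2)^(L-1) := by
        conv_lhs => rw [show L = (L-1)+1 by omega]
        rw [pow_succ]
        ring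
      calc (ν/2)^L/D = (ν/2) * ((ν/2)^(L-1)/D) := by rw [hLpow]; ring
      _ ≤ (ν/2) * (α ν 0)⁻¹ := mul_le_mul_of_nonneg_left hinv_ge hνh.le
      _ ≤ α ν i * ∑ j, (α ν j)⁻¹ := hαi_m
  have hub : Tendsto (fun ν : ℝ => 1 + ((L:ℝ)-1)*2*D/ν) atTop (nhds 1) := by
    have h1 : Tendsto (fun ν : ℝ => ((L:ℝ)-1)*2*D/ν) atTop (nhds 0) :=
      tendsto_const_nhds.div_atTop tendsto_id
    simpa using tendsto_const_nhds.add h1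
  have h0m : Tendsto (fun ν => α ν 0 * ∑ j, (α ν j)⁻¹) atTop (nhds 1) :=
    tendsto_of_tendsto_of_tendsto_of_le_of_le' tendsto_const_nhds hub
      (hA.mono fun ν h => h.1) (hA.mono fun ν h => h.2.1)
  have hpow : Tendsto (fun ν : ℝ => (ν/2)^L/D) atTop atTop := by
    apply Tendsto.atTop_div_const hDpos
    exact (tendsto_pow_atTop (by omega : L ≠ 0)).comp
      (tendsto_id.atTop_div_const (by norm_num : (0:ℝ) < 2))
  have hfac : ∀ i : Fin L, Tendsto (fun ν => (1 + s / (α ν i * ∑ j, (α ν j)⁻¹))⁻¹) atTop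
      (nhds (if (i:ℕ) = 0 then (1+s)⁻¹ else 1)) := by
    intro i
    by_cases hi : (i:ℕ) = 0
    · rw [if_pos hi]
      have hieq : i = 0 := Fin.ext (by simpa using hi)
      rw [hieq]
      have h1 : Tendsto (fun ν => 1 + s / (α ν 0 * ∑ j, (α ν j)⁻¹)) atTop
          (nhds (1 + s/1)) :=
        tendsto_const_nhds.add (tendsto_const_nhds.div h0m one_ne_zero)
      rw [div_one] at h1
      exact h1.inv₀ (by linarith : (1:ℝ) + s ≠ 0)
    · rw [if_neg hi]
      have hsq : Tendsto (fun ν => s / (α ν i * ∑ j, (α ν j)⁻¹)) atTop (nhds 0) := by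
        have hupper : Tendsto (fun ν : ℝ => s/((ν/2)^L/D)) atTop (nhds 0) :=
          tendsto_const_nhds.div_atTop hpow
        apply tendsto_of_tendsto_of_tendsto_of_le_of_le' tendsto_const_nhds hupper
        · filter_upwards [hA, eventually_gt_atTop (0:ℝ)] with ν h hν
          have h3 := h.2.2 i hi
          have hposdenom : 0 < (ν/2)^L/D := by positivity
          exact div_nonneg hs (le_trans hposdenom.le h3)
        · filter_upwards [hA, eventually_gt_atTop (0:ℝ)] with ν h hν
          have h3 := h.2.2 i hi
          have hposdenom : 0 < (ν/2)^L/D := by positivity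
          exact div_le_div_of_nonneg_left hs hposdenom h3
      have h1 : Tendsto (fun ν => 1 + s / (α ν i * ∑ j, (α ν j)⁻¹)) atTop (nhds (1+0)) :=
        tendsto_const_nhds.add hsq
      rw [add_zero] at h1
      have := h1.inv₀ one_ne_zero
      simpa using this
  have hprodall := tendsto_finset_prod (Finset.univ : Finset (Fin L))
    (fun i (_ : i ∈ Finset.univ) => hfac i)
  have hval : (∏ i : Fin L, (if (i:ℕ) = 0 then (1+s)⁻¹ else 1)) = (1+s)⁻¹ := by
    have h1 : ∀ i : Fin L, (if (i:ℕ) = 0 then (1+s)⁻¹ else 1)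
        = (if i = (0 : Fin L) then (1+s)⁻¹ else 1) := by
      intro i
      by_cases h : i = (0 : Fin L)
      · rw [if_pos h, if_pos (by rw [h]; simp)]
      · rw [if_neg h, if_neg (Fin.val_ne_zero_iff.mpr h)]
    rw [Finset.prod_congr rfl (fun i _ => h1 i), Finset.prod_ite_eq' Finset.univ (0 : Fin L)
      (fun _ => (1+s)⁻¹)]
    simp
  rw [one_div]
  exact hval ▸ hprodall
end

section
/- Let d ≥ 1 be an integer, let λ_1, …, λ_{d−1} > 0 and μ_1, …, μ_d > 0, and set λ_d := 0. Let A be the d×d real matrix with A_{i,i} = λ_i + μ_i for 1 ≤ i ≤ d, A_{i,i+1} = −λ_i for 1 ≤ i ≤ d−1, A_{i+1,i} = −μ_{i+1} for 1 ≤ i ≤ d−1, and all other entries zero (A is the negative of the generator, restricted to the transient states {1,…,d}, of a birth–death process on {0,1,…,d} with birth rates λ_i, death rates μ_i, and absorbing state 0). Then A is invertible and the sum of the entries of the row of A^{−1} indexed by d equals the trace of A^{−1}: Σ_{j=1}^{d} (A^{−1})_{d,j} = tr(A^{−1}). (This is the mean version of the Karlin–McGregor/Keilson theorem: the expected absorption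 time started from state d equals the sum of the reciprocals of the eigenvalues of A.) -/
/-- The `d×d` matrix of a birth–death process on `{0,1,…,d}` with birth rates
`λ_i`, death rates `μ_i` and absorbing state `0`, restricted (and negated) to
the transient states `{1,…,d}`.  Index `i : Fin d` represents state `i + 1`. -/
noncomputable def bdAbsorbMat (d : ℕ) (lam mu : Fin d → ℝ) :
    Matrix (Fin d) (Fin d) ℝ :=
  Matrix.of fun i j =>
    if j = i then lam i + mu i
    else if (j : ℕ) = (i : ℕ) + 1 then -lam i
    else if (i : ℕ) = (j : ℕ) + 1 then -mu i
    else 0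

noncomputable def bdTheta (lam mu : ℕ → ℝ) : ℕ → ℝ
  | 0 => 1
  | 1 => lam 0 + mu 0
  | (n+2) => (lam (n+1) + mu (n+1)) * bdTheta lam mu (n+1)
      - lam n * mu (n+1) * bdTheta lam mu n

lemma bdTheta_psi (lam mu : ℕ → ℝ) (n : ℕ) :
    bdTheta lam mu (n+1) = (∏ k ∈ Finset.range (n+1), mu k) + lam n * bdTheta lam mu n := by
  induction n with
  | zero =>
    rw [show bdTheta lam mu 1 = lam 0 + mu 0 from rfl,
      show bdTheta lam mu 0 = 1 from rfl, Finset.prod_range_one]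
    ring
  | succ n ih =>
    rw [show n+1+1 = n+2 from rfl, bdTheta, ih, Finset.prod_range_succ mu (n+1)]
    ring

noncomputable def bdInvEnt (lam mu : ℕ → ℝ) (i j : ℕ) : ℝ :=
  if j ≤ i then bdTheta lam mu j / ∏ k ∈ Finset.range (j+1), mu k
  else (∏ k ∈ Finset.Ico i j, lam k) * bdTheta lam mu i / ∏ k ∈ Finset.range (j+1), mu k

lemma bdInvEnt_le (lam mu : ℕ → ℝ) {i j : ℕ} (h : i ≤ j) :
    bdInvEnt lam mu i j =
      (∏ k ∈ Finset.Ico i j, lam k) * bdTheta lam mu i / ∏ k ∈ Finset.range (j+1), mu k := by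
  rcases eq_or_lt_of_le h with rfl | h
  · rw [bdInvEnt, if_pos le_rfl, Finset.Ico_self, Finset.prod_empty, one_mul]
  · rw [bdInvEnt, if_neg (show ¬ j ≤ i from by omega)]

private lemma comb3 (a x b y c z M : ℝ) :
    a * (x / M) + b * (y / M) + c * (z / M) = (a*x + b*y + c*z) / M := by ring

private lemma comb2 (a x b y M : ℝ) :
    a * (x / M) + b * (y / M) + 0 = (a*x + b*y) / M := by ring

lemma bdKey (lam mu : ℕ → ℝ) (hmu : ∀ k, mu k ≠ 0) (i j : ℕ) :
    (lam i + mu i) * bdInvEnt lam mu i j + (-(lam i) * bdInvEnt lam mu (i+1) j)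
      + (if i = 0 then 0 else -(mu i) * bdInvEnt lam mu (i-1) j)
      = if i = j then 1 else 0 := by
  have hM : ∀ m : ℕ, (∏ k ∈ Finset.range m, mu k) ≠ 0 :=
    fun m => Finset.prod_ne_zero_iff.mpr fun k _ => hmu k
  rcases lt_trichotomy i j with hij | rfl | hij
  · rw [if_neg (show ¬ i = j from by omega)]
    rw [bdInvEnt_le _ _ (show i ≤ j from by omega),
      bdInvEnt_le _ _ (show i+1 ≤ j from by omega)]
    rcases Nat.eq_zero_or_pos i with rfl | hi
    · rw [if_pos rfl, comb2, div_eq_zero_iff]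
      left
      rw [Finset.prod_eq_prod_Ico_succ_bot hij,
        show bdTheta lam mu 1 = lam 0 + mu 0 from rfl,
        show bdTheta lam mu 0 = 1 from rfl]
      ring
    · rw [if_neg (show ¬ i = 0 from by omega),
        bdInvEnt_le _ _ (show i-1 ≤ j from by omega)]
      obtain ⟨m, rfl⟩ : ∃ m, i = m + 1 := ⟨i - 1, by omega⟩
      simp only [Nat.add_sub_cancel]
      rw [comb3, div_eq_zero_iff]
      left
      rw [Finset.prod_eq_prod_Ico_succ_bot (show m < j from by omega),
        Finset.prod_eq_prod_Ico_succ_bot (show m+1 < j from by omega),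
        show bdTheta lam mu (m+2) = (lam (m+1) + mu (m+1)) * bdTheta lam mu (m+1)
          - lam m * mu (m+1) * bdTheta lam mu m from rfl]
      ring
  · rw [if_pos rfl]
    rcases Nat.eq_zero_or_pos i with rfl | hi
    · rw [if_pos rfl, bdInvEnt, if_pos le_rfl, bdInvEnt,
        if_pos (show (0:ℕ) ≤ 1 from by omega), comb2,
        div_eq_one_iff_eq (hM 1), show bdTheta lam mu 0 = 1 from rfl,
        Finset.prod_range_one]
      ring
    · rw [if_neg (show ¬ i = 0 from by omega)]
      obtain ⟨m, rfl⟩ : ∃ m, i = m + 1 := ⟨i - 1, by omega⟩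
      simp only [Nat.add_sub_cancel]
      rw [bdInvEnt, if_pos le_rfl, bdInvEnt, if_pos (show m+1 ≤ m+2 from by omega),
        bdInvEnt_le _ _ (show m ≤ m+1 from by omega), Nat.Ico_succ_singleton,
        Finset.prod_singleton, comb3, div_eq_one_iff_eq (hM (m+2)),
        bdTheta_psi lam mu m, Finset.prod_range_succ mu (m+1)]
      ring
  · rw [if_neg (show ¬ i = j from by omega)]
    rw [bdInvEnt, if_pos (show j ≤ i from by omega),
      bdInvEnt, if_pos (show j ≤ i+1 from by omega)]
    rw [if_neg (show ¬ i = 0 from by omega),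
      bdInvEnt, if_pos (show j ≤ i-1 from by omega)]
    ring

/-- Karlin–McGregor/Keilson, mean version.  Let `d ≥ 1`, let
`λ_1,…,λ_{d−1} > 0`, `μ_1,…,μ_d > 0` and `λ_d = 0`, and let `A` be the
tridiagonal matrix with `A_{i,i} = λ_i + μ_i`, `A_{i,i+1} = −λ_i`,
`A_{i+1,i} = −μ_{i+1}`.  Then `A` is invertible and the sum of the entries of
the last row of `A⁻¹` equals the trace of `A⁻¹`:
`Σ_{j=1}^d (A⁻¹)_{d,j} = tr(A⁻¹)` (the expected absorption time from state `d`
equals the sum of the reciprocals of the eigenvalues of `A`). -/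
theorem bdAbsorbMat_mean_absorption_eq_trace_inv (d : ℕ) (hd : 1 ≤ d)
    (lam mu : Fin d → ℝ)
    (hlam : ∀ i : Fin d, (i : ℕ) < d - 1 → 0 < lam i)
    (hlamLast : lam ⟨d - 1, by omega⟩ = 0)
    (hmu : ∀ i, 0 < mu i) :
    IsUnit (bdAbsorbMat d lam mu).det ∧
      ∑ j : Fin d, (bdAbsorbMat d lam mu)⁻¹ ⟨d - 1, by omega⟩ j =
        Matrix.trace (bdAbsorbMat d lam mu)⁻¹ := by
  classical
  set lam' : ℕ → ℝ := fun n => if h : n < d then lam ⟨n, h⟩ else 0 with hlam'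
  set mu' : ℕ → ℝ := fun n => if h : n < d then mu ⟨n, h⟩ else 1 with hmu'
  have hmu'ne : ∀ k, mu' k ≠ 0 := by
    intro k
    rw [hmu']
    dsimp only
    split
    · exact ne_of_gt (hmu _)
    · exact one_ne_zero
  have hlam'eq : ∀ i : Fin d, lam' (i : ℕ) = lam i := by
    intro i; rw [hlam']; dsimp only; rw [dif_pos i.isLt]
  have hmu'eq : ∀ i : Fin d, mu' (i : ℕ) = mu i := by
    intro i; rw [hmu']; dsimp only; rw [dif_pos i.isLt]
  have hlam'last : lam' (d-1) = 0 := by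
    rw [hlam']; dsimp only; rw [dif_pos (show d - 1 < d from by omega)]
    exact hlamLast
  set B : Matrix (Fin d) (Fin d) ℝ :=
    Matrix.of fun i j => bdInvEnt lam' mu' (i : ℕ) (j : ℕ) with hB
  have hAB : bdAbsorbMat d lam mu * B = 1 := by
    ext i j
    rw [Matrix.mul_apply]
    have hsplit : ∀ k : Fin d, bdAbsorbMat d lam mu i k * B k j =
        (if k = i then (lam' i + mu' i) * bdInvEnt lam' mu' i j else 0)
        + (if (k : ℕ) = (i : ℕ) + 1 then
            -(lam' i) * bdInvEnt lam' mu' ((i : ℕ)+1) (j : ℕ) else 0)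
        + (if (i : ℕ) = (k : ℕ) + 1 then
            -(mu' i) * bdInvEnt lam' mu' ((i : ℕ)-1) (j : ℕ) else 0) := by
      intro k
      simp only [bdAbsorbMat, Matrix.of_apply, hB, hlam'eq, hmu'eq]
      by_cases h1 : k = i
      · subst h1
        rw [if_pos rfl, if_pos rfl, if_neg (by omega), if_neg (by omega)]
        ring
      · rw [if_neg h1, if_neg h1]
        by_cases h2 : (k : ℕ) = (i : ℕ) + 1
        · rw [if_pos h2, if_pos h2, if_neg (by omega), h2]
          ring
        · rw [if_neg h2, if_neg h2]
          by_cases h3 : (i : ℕ) = (k : ℕ) + 1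
          · rw [if_pos h3, if_pos h3, show (k : ℕ) = (i : ℕ) - 1 from by omega]
            ring
          · rw [if_neg h3, if_neg h3]
            ring
    rw [Finset.sum_congr rfl fun k _ => hsplit k]
    rw [Finset.sum_add_distrib, Finset.sum_add_distrib]
    have hS1 : ∑ k : Fin d, (if k = i then (lam' i + mu' i) * bdInvEnt lam' mu' i j else 0)
        = (lam' i + mu' i) * bdInvEnt lam' mu' i j := by
      rw [Finset.sum_ite_eq' Finset.univ i]
      simp
    have hS2 : ∑ k : Fin d, (if (k : ℕ) = (i : ℕ) + 1 then
        -(lam' i) * bdInvEnt lam' mu' ((i : ℕ)+1) (j : ℕ) else 0)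
        = -(lam' i) * bdInvEnt lam' mu' ((i : ℕ)+1) (j : ℕ) := by
      by_cases hi : (i : ℕ) + 1 < d
      · rw [Finset.sum_eq_single (⟨(i : ℕ)+1, hi⟩ : Fin d)]
        · rw [if_pos rfl]
        · intro b _ hb
          rw [if_neg (fun hc => hb (Fin.ext hc))]
        · intro h; exact absurd (Finset.mem_univ _) h
      · have hzero : lam' (i : ℕ) = 0 := by
          have : (i : ℕ) = d - 1 := by have := i.isLt; omega
          rw [this, hlam'last]
        rw [hzero]
        rw [Finset.sum_eq_zero]
        · ring
        · intro b _
          rw [if_neg (by have := b.isLt; omega)]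
    have hS3 : ∑ k : Fin d, (if (i : ℕ) = (k : ℕ) + 1 then
        -(mu' i) * bdInvEnt lam' mu' ((i : ℕ)-1) (j : ℕ) else 0)
        = (if (i : ℕ) = 0 then 0 else -(mu' i) * bdInvEnt lam' mu' ((i : ℕ)-1) (j : ℕ)) := by
      by_cases hi : (i : ℕ) = 0
      · rw [if_pos hi, Finset.sum_eq_zero]
        intro b _
        rw [if_neg (by omega)]
      · rw [if_neg hi]
        rw [Finset.sum_eq_single (⟨(i : ℕ)-1, by have := i.isLt; omega⟩ : Fin d)]
        · rw [if_pos (by simp; omega)]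
        · intro b _ hb
          rw [if_neg (fun hc => hb (Fin.ext (by simp only [Fin.val_mk]; omega)))]
        · intro h; exact absurd (Finset.mem_univ _) h
    rw [hS1, hS2, hS3, bdKey lam' mu' hmu'ne i j, Matrix.one_apply]
    simp [Fin.ext_iff]
  have hdet : IsUnit (bdAbsorbMat d lam mu).det :=
    Matrix.isUnit_det_of_right_inverse hAB
  have hinv : (bdAbsorbMat d lam mu)⁻¹ = B := Matrix.inv_eq_right_inv hAB
  refine ⟨hdet, ?_⟩
  rw [hinv, Matrix.trace]
  apply Finset.sum_congr rfl
  intro j _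
  simp only [hB, Matrix.of_apply, Matrix.diag_apply]
  rw [bdInvEnt, if_pos (show (j:ℕ) ≤ d - 1 from by have := j.isLt; omega),
    bdInvEnt, if_pos le_rfl]
end

section
/- Fix integers L₁ ≥ 1, L₂ ≥ 1. For states l ∈ {−L₁, …, −1, 0, 1, …, L₂} define weights w_{−l} := C(L₁,l)·ν^l for 1 ≤ l ≤ L₁, w_0 := 1, and w_m := C(L₂,m)·ν^m for 1 ≤ m ≤ L₂, and define upward rates q(l, l+1) := |l| if −L₁ ≤ l < 0 and q(l, l+1) := (L₂−l)ν if 0 ≤ l < L₂. For −L₁ ≤ l < L₂ let m_l(ν) := (1/q(l,l+1)) · Σ_{n=−L₁}^{l} (w_n/w_l) (this is the expected transition time from state l to state l+1 of the bipartite birth–death chain). Then for any 0 < l₁ ≤ L₁ and 0 < l₂ ≤ L₂, the expected transition time from −l₁ to l₂, namely Σ_{l=−l₁}^{l₂−1} m_l(ν), satisfies Σ_{l=−l₁}^{l₂−1} m_l(ν) ~ ((L₁+L₂)/(L₁·L₂)) · ν^{L₁−1} as ν → ∞. -/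
open Filter Finset

/-- Stationary weights of the bipartite birth–death chain on
`{−L₁,…,−1,0,1,…,L₂}`:  `w_{−l} = C(L₁,l) ν^l` for `1 ≤ l ≤ L₁`, `w_0 = 1`,
and `w_m = C(L₂,m) ν^m` for `1 ≤ m ≤ L₂`. -/
noncomputable def bipWeight (L₁ L₂ : ℕ) (ν : ℝ) (l : ℤ) : ℝ :=
  if l < 0 then (L₁.choose l.natAbs : ℝ) * ν ^ l.natAbs
  else (L₂.choose l.toNat : ℝ) * ν ^ l.toNat

/-- Upward rates of the bipartite birth–death chain:
`q(l,l+1) = |l|` for `l < 0` and `q(l,l+1) = (L₂−l)ν` for `l ≥ 0`. -/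
noncomputable def bipUpRate (L₂ : ℕ) (ν : ℝ) (l : ℤ) : ℝ :=
  if l < 0 then (l.natAbs : ℝ) else ((L₂ : ℝ) - (l : ℝ)) * ν

/-- Expected transition time from state `l` to state `l+1` of the bipartite
birth–death chain:  `m_l(ν) = (1/q(l,l+1)) · Σ_{n=−L₁}^{l} w_n/w_l`. -/
noncomputable def bipMeanUpTime (L₁ L₂ : ℕ) (ν : ℝ) (l : ℤ) : ℝ :=
  (1 / bipUpRate L₂ ν l) *
    ∑ n ∈ Finset.Icc (-(L₁ : ℤ)) l, bipWeight L₁ L₂ ν n / bipWeight L₁ L₂ ν l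

/-- Limit of the `(l,n)` term of the normalized double sum. -/
noncomputable def bipBval (L₁ L₂ : ℕ) (l n : ℤ) : ℝ :=
  if n = -(L₁ : ℤ) then
    (if l = -1 then (L₂ : ℝ) / ((L₁ : ℝ) + (L₂ : ℝ))
     else if l = 0 then (L₁ : ℝ) / ((L₁ : ℝ) + (L₂ : ℝ)) else 0)
  else 0

/-- Limit of a quotient of monomials whose exponent is nonpositive. -/
lemma bip_mono_limit (A B C D : ℝ) (j k s m : ℕ) (hle : j ≤ k + s + m) :
    Tendsto (fun ν : ℝ => A * ν ^ j / (B * ν ^ k) / (C * ν ^ s) / (D * ν ^ m)) atTop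
      (nhds (if j = k + s + m then A / (B * C * D) else 0)) := by
  have key : (fun ν : ℝ => A / (B * C * D) * ν ^ ((j : ℤ) - (k + s + m : ℕ))) =ᶠ[atTop]
      (fun ν : ℝ => A * ν ^ j / (B * ν ^ k) / (C * ν ^ s) / (D * ν ^ m)) := by
    filter_upwards [eventually_gt_atTop (0 : ℝ)] with ν hν
    have hν0 : ν ≠ 0 := ne_of_gt hν
    have hpow : (ν : ℝ) ^ ((j : ℤ) - (k + s + m : ℕ)) = ν ^ j / ν ^ (k + s + m) := by
      rw [zpow_sub₀ hν0, zpow_natCast, zpow_natCast]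
    rw [hpow, pow_add, pow_add, div_div, div_div, div_mul_div_comm]
    congr 1
    ring
  rcases eq_or_ne j (k + s + m) with hE | hE
  · rw [if_pos hE]
    refine Tendsto.congr' key ?_
    have hz : ((j : ℤ) - (k + s + m : ℕ)) = 0 := by omega
    simp only [hz, zpow_zero, mul_one]
    exact tendsto_const_nhds
  · rw [if_neg hE]
    have hneg : ((j : ℤ) - (k + s + m : ℕ)) < 0 := by omega
    have h0 := (tendsto_zpow_atTop_zero hneg).const_mul (A / (B * C * D))
    rw [mul_zero] at h0
    exact Tendsto.congr' key h0

lemma bip_termTendsto (L₁ L₂ : ℕ) (hL₁ : 1 ≤ L₁) (hL₂ : 1 ≤ L₂) (l n : ℤ)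
    (hn : -(L₁ : ℤ) ≤ n) (hnl : n ≤ l) (hl : l ≤ (L₂ : ℤ) - 1) :
    Tendsto (fun ν : ℝ => bipWeight L₁ L₂ ν n / bipWeight L₁ L₂ ν l / bipUpRate L₂ ν l
        / ((((L₁ : ℝ) + (L₂ : ℝ)) / ((L₁ : ℝ) * (L₂ : ℝ))) * ν ^ (L₁ - 1)))
      atTop (nhds (bipBval L₁ L₂ l n)) := by
  have hL₁R : (0 : ℝ) < L₁ := by exact_mod_cast hL₁
  have hL₂R : (0 : ℝ) < L₂ := by exact_mod_cast hL₂
  have hsum : (0 : ℝ) < (L₁ : ℝ) + (L₂ : ℝ) := by linarith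
  by_cases hlneg : l < 0
  · -- l < 0, hence n < 0
    have hnneg : n < 0 := lt_of_le_of_lt hnl hlneg
    have hjle : n.natAbs ≤ L₁ := by omega
    have hk1 : 1 ≤ l.natAbs := by omega
    have hle : n.natAbs ≤ l.natAbs + 0 + (L₁ - 1) := by omega
    have hmono := bip_mono_limit (L₁.choose n.natAbs : ℝ) (L₁.choose l.natAbs : ℝ)
      (l.natAbs : ℝ) (((L₁ : ℝ) + (L₂ : ℝ)) / ((L₁ : ℝ) * (L₂ : ℝ)))
      n.natAbs l.natAbs 0 (L₁ - 1) hle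
    have hval : (if n.natAbs = l.natAbs + 0 + (L₁ - 1) then
        (L₁.choose n.natAbs : ℝ) / ((L₁.choose l.natAbs : ℝ) * (l.natAbs : ℝ) *
          (((L₁ : ℝ) + (L₂ : ℝ)) / ((L₁ : ℝ) * (L₂ : ℝ)))) else 0) = bipBval L₁ L₂ l n := by
      rcases eq_or_ne n.natAbs (l.natAbs + 0 + (L₁ - 1)) with hE | hE
      · rw [if_pos hE]
        have hj : n.natAbs = L₁ := by omega
        have hk : l.natAbs = 1 := by omega
        have hn' : n = -(L₁ : ℤ) := by omega
        have hl' : l = -1 := by omega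
        rw [hj, hk, Nat.choose_self, Nat.choose_one_right]
        rw [bipBval, if_pos hn', if_pos hl']
        push_cast
        field_simp
      · rw [if_neg hE, bipBval]
        have h1 : l ≠ 0 := by omega
        rcases eq_or_ne n (-(L₁ : ℤ)) with hn' | hn'
        · have hj : n.natAbs = L₁ := by omega
          have hk : l.natAbs ≠ 1 := by omega
          have hl' : l ≠ -1 := by omega
          rw [if_pos hn', if_neg hl', if_neg h1]
        · rw [if_neg hn']
    rw [← hval]
    refine hmono.congr fun ν => ?_
    simp only [bipWeight, bipUpRate, if_pos hnneg, if_pos hlneg, pow_zero, mul_one]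
  · -- l ≥ 0
    push_neg at hlneg
    by_cases hnneg : n < 0
    · have hjle : n.natAbs ≤ L₁ := by omega
      have hle : n.natAbs ≤ l.toNat + 1 + (L₁ - 1) := by omega
      have hmono := bip_mono_limit (L₁.choose n.natAbs : ℝ) (L₂.choose l.toNat : ℝ)
        ((L₂ : ℝ) - (l : ℝ)) (((L₁ : ℝ) + (L₂ : ℝ)) / ((L₁ : ℝ) * (L₂ : ℝ)))
        n.natAbs l.toNat 1 (L₁ - 1) hle
      have hval : (if n.natAbs = l.toNat + 1 + (L₁ - 1) then
          (L₁.choose n.natAbs : ℝ) / ((L₂.choose l.toNat : ℝ) * ((L₂ : ℝ) - (l : ℝ)) *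
            (((L₁ : ℝ) + (L₂ : ℝ)) / ((L₁ : ℝ) * (L₂ : ℝ)))) else 0) = bipBval L₁ L₂ l n := by
        rcases eq_or_ne n.natAbs (l.toNat + 1 + (L₁ - 1)) with hE | hE
        · rw [if_pos hE]
          have hj : n.natAbs = L₁ := by omega
          have hk : l = 0 := by omega
          have hn' : n = -(L₁ : ℤ) := by omega
          rw [hj, hk, Nat.choose_self]
          rw [bipBval, if_pos hn', if_neg (by norm_num : (0 : ℤ) ≠ -1), if_pos rfl]
          simp only [Int.toNat_zero, Nat.choose_zero_right, Int.cast_zero, sub_zero,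
            Nat.cast_one]
          field_simp
        · rw [if_neg hE, bipBval]
          have h1 : l ≠ -1 := by omega
          rcases eq_or_ne n (-(L₁ : ℤ)) with hn' | hn'
          · have hj : n.natAbs = L₁ := by omega
            have hl0 : l ≠ 0 := by omega
            rw [if_pos hn', if_neg h1, if_neg hl0]
          · rw [if_neg hn']
      rw [← hval]
      refine hmono.congr fun ν => ?_
      simp only [bipWeight, bipUpRate, if_pos hnneg, if_neg (not_lt.mpr hlneg), pow_one]
    · -- n ≥ 0
      push_neg at hnneg
      have hle : n.toNat ≤ l.toNat + 1 + (L₁ - 1) := by omega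
      have hmono := bip_mono_limit (L₂.choose n.toNat : ℝ) (L₂.choose l.toNat : ℝ)
        ((L₂ : ℝ) - (l : ℝ)) (((L₁ : ℝ) + (L₂ : ℝ)) / ((L₁ : ℝ) * (L₂ : ℝ)))
        n.toNat l.toNat 1 (L₁ - 1) hle
      have hval : (if n.toNat = l.toNat + 1 + (L₁ - 1) then
          (L₂.choose n.toNat : ℝ) / ((L₂.choose l.toNat : ℝ) * ((L₂ : ℝ) - (l : ℝ)) *
            (((L₁ : ℝ) + (L₂ : ℝ)) / ((L₁ : ℝ) * (L₂ : ℝ)))) else 0) = bipBval L₁ L₂ l n := by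
        have hE : n.toNat ≠ l.toNat + 1 + (L₁ - 1) := by omega
        have hn' : n ≠ -(L₁ : ℤ) := by omega
        rw [if_neg hE, bipBval, if_neg hn']
      rw [← hval]
      refine hmono.congr fun ν => ?_
      simp only [bipWeight, bipUpRate, if_neg (not_lt.mpr hnneg),
        if_neg (not_lt.mpr hlneg), pow_one]

/-- For `0 < l₁ ≤ L₁` and `0 < l₂ ≤ L₂`, the expected transition time from
`−l₁` to `l₂`, namely `Σ_{l=−l₁}^{l₂−1} m_l(ν)`, satisfies
`Σ_{l=−l₁}^{l₂−1} m_l(ν) ~ ((L₁+L₂)/(L₁·L₂)) · ν^{L₁−1}` as `ν → ∞`. -/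
theorem bipartite_meanTransitionTime_asymptotics (L₁ L₂ : ℕ)
    (hL₁ : 1 ≤ L₁) (hL₂ : 1 ≤ L₂) :
    ∀ l₁ l₂ : ℕ, 0 < l₁ → l₁ ≤ L₁ → 0 < l₂ → l₂ ≤ L₂ →
      Tendsto
        (fun ν : ℝ =>
          (∑ l ∈ Finset.Icc (-(l₁ : ℤ)) ((l₂ : ℤ) - 1), bipMeanUpTime L₁ L₂ ν l) /
            ((((L₁ : ℝ) + (L₂ : ℝ)) / ((L₁ : ℝ) * (L₂ : ℝ))) * ν ^ (L₁ - 1)))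
        atTop (nhds 1) := by
  intro l₁ l₂ hl₁pos hl₁L hl₂pos hl₂L
  have hL₁R : (0 : ℝ) < L₁ := by exact_mod_cast hL₁
  have hL₂R : (0 : ℝ) < L₂ := by exact_mod_cast hL₂
  have hfun : ∀ ν : ℝ,
      (∑ l ∈ Finset.Icc (-(l₁ : ℤ)) ((l₂ : ℤ) - 1), bipMeanUpTime L₁ L₂ ν l) /
          ((((L₁ : ℝ) + (L₂ : ℝ)) / ((L₁ : ℝ) * (L₂ : ℝ))) * ν ^ (L₁ - 1))
        = ∑ l ∈ Finset.Icc (-(l₁ : ℤ)) ((l₂ : ℤ) - 1), ∑ n ∈ Finset.Icc (-(L₁ : ℤ)) l,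
            bipWeight L₁ L₂ ν n / bipWeight L₁ L₂ ν l / bipUpRate L₂ ν l /
              ((((L₁ : ℝ) + (L₂ : ℝ)) / ((L₁ : ℝ) * (L₂ : ℝ))) * ν ^ (L₁ - 1)) := by
    intro ν
    rw [Finset.sum_div]
    refine Finset.sum_congr rfl fun l _ => ?_
    rw [bipMeanUpTime, one_div, inv_mul_eq_div, Finset.sum_div, Finset.sum_div]
  have key : Tendsto
      (fun ν : ℝ => ∑ l ∈ Finset.Icc (-(l₁ : ℤ)) ((l₂ : ℤ) - 1),
        ∑ n ∈ Finset.Icc (-(L₁ : ℤ)) l,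
          bipWeight L₁ L₂ ν n / bipWeight L₁ L₂ ν l / bipUpRate L₂ ν l /
            ((((L₁ : ℝ) + (L₂ : ℝ)) / ((L₁ : ℝ) * (L₂ : ℝ))) * ν ^ (L₁ - 1)))
      atTop
      (nhds (∑ l ∈ Finset.Icc (-(l₁ : ℤ)) ((l₂ : ℤ) - 1),
        ∑ n ∈ Finset.Icc (-(L₁ : ℤ)) l, bipBval L₁ L₂ l n)) := by
    refine tendsto_finset_sum _ fun l hl => tendsto_finset_sum _ fun n hn => ?_
    simp only [Finset.mem_Icc] at hl hn
    exact bip_termTendsto L₁ L₂ hL₁ hL₂ l n hn.1 hn.2 (by omega)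
  have hsum : (∑ l ∈ Finset.Icc (-(l₁ : ℤ)) ((l₂ : ℤ) - 1),
      ∑ n ∈ Finset.Icc (-(L₁ : ℤ)) l, bipBval L₁ L₂ l n) = 1 := by
    have hinner : ∀ l ∈ Finset.Icc (-(l₁ : ℤ)) ((l₂ : ℤ) - 1),
        (∑ n ∈ Finset.Icc (-(L₁ : ℤ)) l, bipBval L₁ L₂ l n)
          = (if l = -1 then (L₂ : ℝ) / ((L₁ : ℝ) + (L₂ : ℝ))
             else if l = 0 then (L₁ : ℝ) / ((L₁ : ℝ) + (L₂ : ℝ)) else 0) := by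
      intro l hl
      simp only [Finset.mem_Icc] at hl
      rw [show (∑ n ∈ Finset.Icc (-(L₁ : ℤ)) l, bipBval L₁ L₂ l n)
          = ∑ n ∈ Finset.Icc (-(L₁ : ℤ)) l, (if n = -(L₁ : ℤ) then
            (if l = -1 then (L₂ : ℝ) / ((L₁ : ℝ) + (L₂ : ℝ))
             else if l = 0 then (L₁ : ℝ) / ((L₁ : ℝ) + (L₂ : ℝ)) else 0) else 0) from rfl]
      rw [Finset.sum_ite_eq' (Finset.Icc (-(L₁ : ℤ)) l) (-(L₁ : ℤ))]
      rw [if_pos]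
      simp only [Finset.mem_Icc]
      omega
    rw [Finset.sum_congr rfl hinner]
    have hsplit : ∀ l : ℤ,
        (if l = -1 then (L₂ : ℝ) / ((L₁ : ℝ) + (L₂ : ℝ))
         else if l = 0 then (L₁ : ℝ) / ((L₁ : ℝ) + (L₂ : ℝ)) else 0)
        = (if l = -1 then (L₂ : ℝ) / ((L₁ : ℝ) + (L₂ : ℝ)) else 0)
          + (if l = 0 then (L₁ : ℝ) / ((L₁ : ℝ) + (L₂ : ℝ)) else 0) := by
      intro l
      rcases eq_or_ne l (-1) with h | h
      · simp [h]
      · rcases eq_or_ne l 0 with h' | h' <;> simp [h, h']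
    rw [Finset.sum_congr rfl fun l _ => hsplit l, Finset.sum_add_distrib]
    rw [Finset.sum_ite_eq' (Finset.Icc (-(l₁ : ℤ)) ((l₂ : ℤ) - 1)) (-1 : ℤ)]
    rw [Finset.sum_ite_eq' (Finset.Icc (-(l₁ : ℤ)) ((l₂ : ℤ) - 1)) (0 : ℤ)]
    rw [if_pos (by simp only [Finset.mem_Icc]; omega),
        if_pos (by simp only [Finset.mem_Icc]; omega)]
    rw [← add_div, add_comm (L₂ : ℝ) (L₁ : ℝ), div_self (by linarith)]
  rw [hsum] at key
  exact key.congr fun ν => (hfun ν).symm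
end
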